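/- arXiv:2411.06243 — 10 statements merged into one kernel-verified Lean document; each statement's English description precedes it below -/
import Mathlib

section
/- Let n be a positive integer and ε a real number with 0 ≤ ε < n/2. For every nonnegative integer σ and every σ-bit training/inference pair (ρ, f̂) for datasets in [0,1]^n with query domain [0,1], there exists a dataset D ∈ [0,1]^n such that sup_{q ∈ [0,1]} |f̂(ρ(D))(q) − r_D(q)| > ε. -/
/-- The rank function of a dataset `D ∈ [0,1]^n`: `r_D(q) = Σ_i 1[D_i ≤ q]`. -/
noncomputable def rank {n : ℕ} (D : Fin n → ℝ) (q : ℝ) : ℝ :=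
  ∑ i, if D i ≤ q then 1 else 0

/-- no finite-size model can guarantee worst-case error below `n/2`
for learned indexing over real-valued datasets. -/
theorem stmt_3 (n : ℕ) (hn : 0 < n) (ε : ℝ) (hε1 : 0 ≤ ε) (hε2 : ε < (n : ℝ) / 2)
    (σ : ℕ)
    (ρ : (Fin n → ℝ) → (Fin σ → Bool)) (fhat : (Fin σ → Bool) → (ℝ → ℝ)) :
    ∃ D : Fin n → ℝ, (∀ i, D i ∈ Set.Icc (0 : ℝ) 1) ∧
      ∃ q ∈ Set.Icc (0 : ℝ) 1, |fhat (ρ D) q - rank D q| > ε := by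
  haveI : Infinite (Set.Icc (0:ℝ) 1) := Set.Icc.infinite (show (0:ℝ) < 1 by norm_num)
  obtain ⟨x, y, hxy, hcode⟩ :=
    Finite.exists_ne_map_eq_of_infinite
      (fun t : Set.Icc (0:ℝ) 1 => ρ (fun _ => (t : ℝ)))
  wlog hlt : (x : ℝ) < (y : ℝ) generalizing x y
  · exact this y x hxy.symm hcode.symm
      (lt_of_le_of_ne (not_lt.mp hlt) (fun h => hxy (Subtype.ext h.symm)))
  set g := fhat (ρ (fun _ => (x : ℝ)))
  have hrx : rank (fun _ : Fin n => (x : ℝ)) (x : ℝ) = n := by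
    simp [rank]
  have hry : rank (fun _ : Fin n => (y : ℝ)) (x : ℝ) = 0 := by
    simp [rank, not_le.mpr hlt]
  by_cases h : |g (x : ℝ) - n| > ε
  · exact ⟨fun _ => (x : ℝ), fun _ => x.2, (x : ℝ), x.2, by rw [hrx]; exact h⟩
  · refine ⟨fun _ => (y : ℝ), fun _ => y.2, (x : ℝ), x.2, ?_⟩
    have hg : fhat (ρ fun _ => (y : ℝ)) = g := by rw [← hcode]
    rw [hg, hry]
    push_neg at h
    have h1 : (n : ℝ) ≤ |g (x : ℝ) - n| + |g (x : ℝ) - 0| := by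
      have h2 : |(g (x:ℝ) - n) - (g (x:ℝ) - 0)| = (n : ℝ) := by
        rw [show (g (x:ℝ) - n) - (g (x:ℝ) - 0) = -(n:ℝ) by ring, abs_neg,
          abs_of_nonneg (by positivity)]
      calc (n:ℝ) = |(g (x:ℝ) - n) - (g (x:ℝ) - 0)| := h2.symm
        _ ≤ |g (x:ℝ) - n| + |g (x:ℝ) - 0| := abs_sub _ _
    linarith
end

section
/- Let n be a positive integer and ε a real number with 0 < ε ≤ n. There exist a nonnegative integer σ ≤ ⌈n·log₂(e + e/ε + e/n)⌉ and a σ-bit training/inference pair (ρ, f̂) for datasets in [0,1]^n with query domain [0,1] such that for every dataset D ∈ [0,1]^n, ∫_0^1 |f̂(ρ(D))(q) − r_D(q)| dq ≤ ε. -/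
open MeasureTheory

/-- Center of bucket `v` among `K` equal buckets of `[0,1]`. -/
noncomputable def qcenter (K : ℕ) (v : Fin K) : ℝ := ((v : ℝ) + 1/2) / K

/-- Bucket index of `x ∈ [0,1]` among `K` buckets. -/
noncomputable def qidx (K : ℕ) (hK : 0 < K) (x : ℝ) : Fin K :=
  ⟨min ⌊x * K⌋₊ (K - 1), lt_of_le_of_lt (min_le_right _ _) (Nat.sub_lt hK one_pos)⟩

lemma qcenter_close (K : ℕ) (hK : 0 < K) (x : ℝ) (hx0 : 0 ≤ x) (hx1 : x ≤ 1) :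
    |qcenter K (qidx K hK x) - x| ≤ 1 / (2 * K) := by
  have hKR : (0 : ℝ) < K := by exact_mod_cast hK
  set j : ℕ := min ⌊x * K⌋₊ (K - 1) with hj
  have hlow : (j : ℝ) ≤ x * K := by
    have h1 : (j : ℝ) ≤ (⌊x * K⌋₊ : ℝ) := by exact_mod_cast min_le_left _ _
    exact h1.trans (Nat.floor_le (by positivity))
  have hhigh : x * K ≤ (j : ℝ) + 1 := by
    rcases le_or_gt ⌊x * K⌋₊ (K - 1) with h | h
    · have hje : j = ⌊x * K⌋₊ := min_eq_left h
      rw [hje]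
      exact (Nat.lt_floor_add_one (x * K)).le
    · have hje : j = K - 1 := min_eq_right h.le
      have : (j : ℝ) + 1 = (K : ℝ) := by
        rw [hje]
        have : (K - 1 : ℕ) + 1 = K := Nat.succ_pred_eq_of_pos hK
        exact_mod_cast congrArg (Nat.cast (R := ℝ)) this
      rw [this]
      nlinarith
  have hc : qcenter K (qidx K hK x) = ((j : ℝ) + 1/2) / K := rfl
  rw [hc, abs_le]
  constructor
  · have : x ≤ ((j : ℝ) + 1) / K := by
      rw [le_div_iff₀ hKR]; linarith
    have heq : ((j : ℝ) + 1/2) / K + 1 / (2 * K) = ((j : ℝ) + 1) / K := by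
      field_simp; ring
    linarith
  · have : (j : ℝ) / K ≤ x := by
      rw [div_le_iff₀ hKR]; linarith
    have heq : ((j : ℝ) + 1/2) / K - 1 / (2 * K) = (j : ℝ) / K := by
      field_simp; ring
    linarith

lemma ind_diff_le (a b q : ℝ) :
    ENNReal.ofReal |(if a ≤ q then (1:ℝ) else 0) - (if b ≤ q then (1:ℝ) else 0)| ≤
      (Set.Icc (min a b) (max a b)).indicator (fun _ => (1 : ENNReal)) q := by
  by_cases hq : q ∈ Set.Icc (min a b) (max a b)
  · rw [Set.indicator_of_mem hq]
    have h1 : |(if a ≤ q then (1:ℝ) else 0) - (if b ≤ q then (1:ℝ) else 0)| ≤ 1 := by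
      split_ifs <;> norm_num
    calc ENNReal.ofReal _ ≤ ENNReal.ofReal 1 := ENNReal.ofReal_le_ofReal h1
      _ = 1 := ENNReal.ofReal_one
  · rw [Set.indicator_of_notMem hq]
    rw [Set.mem_Icc, not_and_or, not_le, not_le] at hq
    have h0 : (if a ≤ q then (1:ℝ) else 0) = (if b ≤ q then (1:ℝ) else 0) := by
      rcases hq with h | h
      · have ha : ¬ a ≤ q := fun hle => absurd (le_trans (min_le_left a b) hle) (not_le.mpr h)
        have hb : ¬ b ≤ q := fun hle => absurd (le_trans (min_le_right a b) hle) (not_le.mpr h)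
        simp [ha, hb]
      · have ha : a ≤ q := ((le_max_left a b).trans h.le)
        have hb : b ≤ q := ((le_max_right a b).trans h.le)
        simp [ha, hb]
    simp [h0]

lemma lintegral_ind_diff_le (a b : ℝ) :
    (∫⁻ q in Set.Icc (0:ℝ) 1,
      ENNReal.ofReal |(if a ≤ q then (1:ℝ) else 0) - (if b ≤ q then (1:ℝ) else 0)|) ≤
      ENNReal.ofReal |a - b| := by
  calc ∫⁻ q in Set.Icc (0:ℝ) 1,
        ENNReal.ofReal |(if a ≤ q then (1:ℝ) else 0) - (if b ≤ q then (1:ℝ) else 0)|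
      ≤ ∫⁻ q in Set.Icc (0:ℝ) 1,
          (Set.Icc (min a b) (max a b)).indicator (fun _ => (1 : ENNReal)) q :=
        lintegral_mono fun q => ind_diff_le a b q
    _ ≤ ∫⁻ q, (Set.Icc (min a b) (max a b)).indicator (fun _ => (1 : ENNReal)) q :=
        setLIntegral_le_lintegral _ _
    _ = volume (Set.Icc (min a b) (max a b)) := lintegral_indicator_one measurableSet_Icc
    _ = ENNReal.ofReal (max a b - min a b) := Real.volume_Icc
    _ = ENNReal.ofReal |a - b| := by rw [max_sub_min_eq_abs, abs_sub_comm]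

set_option maxHeartbeats 1000000 in
/-- upper bound on the required model size for average-case (1-norm)
error in learned indexing. -/
theorem stmt_5 (n : ℕ) (hn : 0 < n) (ε : ℝ) (hε1 : 0 < ε) (hε2 : ε ≤ (n : ℝ)) :
    ∃ σ : ℕ, (σ : ℤ) ≤
      ⌈(n : ℝ) * Real.logb 2 (Real.exp 1 + Real.exp 1 / ε + Real.exp 1 / (n : ℝ))⌉ ∧
    ∃ (ρ : (Fin n → ℝ) → (Fin σ → Bool)) (fhat : (Fin σ → Bool) → (ℝ → ℝ)),
      ∀ D : Fin n → ℝ, (∀ i, D i ∈ Set.Icc (0 : ℝ) 1) →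
        ∫⁻ q in Set.Icc (0 : ℝ) 1, ENNReal.ofReal |fhat (ρ D) q - rank D q| ≤
          ENNReal.ofReal ε := by
  classical
  have hnR : (0 : ℝ) < n := by exact_mod_cast hn
  set e : ℝ := Real.exp 1 with he
  have he2 : (2 : ℝ) ≤ e := by
    have := Real.add_one_le_exp (1 : ℝ); rw [he]; linarith
  have hepos : (0 : ℝ) < e := by linarith
  set A : ℝ := e + e / ε + e / n with hA
  have hA1 : (1 : ℝ) < A := by
    have h1 : 0 < e / ε := by positivity
    have h2 : 0 < e / n := by positivity
    rw [hA]; linarith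
  have hlogb : 0 ≤ Real.logb 2 A := Real.logb_nonneg one_lt_two hA1.le
  have hval0 : 0 ≤ (n : ℝ) * Real.logb 2 A := mul_nonneg hnR.le hlogb
  have hceil0 : 0 ≤ ⌈(n : ℝ) * Real.logb 2 A⌉ := Int.ceil_nonneg hval0
  refine ⟨(⌈(n : ℝ) * Real.logb 2 A⌉).toNat, by rw [Int.toNat_of_nonneg hceil0], ?_⟩
  set σ : ℕ := (⌈(n : ℝ) * Real.logb 2 A⌉).toNat with hσ
  have hσval : (n : ℝ) * Real.logb 2 A ≤ σ := by
    have h1 := Int.le_ceil ((n : ℝ) * Real.logb 2 A)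
    have h2 : ((⌈(n : ℝ) * Real.logb 2 A⌉ : ℤ) : ℝ) = (σ : ℝ) := by
      rw [hσ]; exact_mod_cast congrArg (fun z : ℤ => (z : ℝ)) (Int.toNat_of_nonneg hceil0).symm
    linarith
  -- number of buckets
  set K : ℕ := ⌈(n : ℝ) / (2 * ε)⌉₊ with hK
  have hKpos : 0 < K := by
    rw [hK]; exact Nat.ceil_pos.mpr (by positivity)
  have hKR : (0 : ℝ) < K := by exact_mod_cast hKpos
  have hKge : (n : ℝ) / (2 * ε) ≤ K := by rw [hK]; exact Nat.le_ceil _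
  have hKle : (K : ℝ) ≤ (n : ℝ) / (2 * ε) + 1 := by
    rw [hK]; exact (Nat.ceil_lt_add_one (by positivity)).le
  -- cardinality bound
  have hcastm : ((K + n - 1 : ℕ) : ℝ) = (K : ℝ) + n - 1 := by
    have h1 : 1 ≤ K + n := le_add_right hKpos
    push_cast [Nat.cast_sub h1]; ring
  have hcard : Fintype.card (Sym (Fin K) n) ≤ Fintype.card (Fin σ → Bool) := by
    haveI : NeZero K := ⟨hKpos.ne'⟩
    have hc1 : Fintype.card (Sym (Fin K) n) = (K + n - 1).choose n := by
      rw [Sym.card_sym_eq_choose]; simp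
    have hc2 : Fintype.card (Fin σ → Bool) = 2 ^ σ := by simp [Fintype.card_fun]
    rw [hc1, hc2]
    have hreal : ((K + n - 1).choose n : ℝ) ≤ (2 : ℝ) ^ σ := by
      have hm : (0 : ℝ) ≤ ((K + n - 1 : ℕ) : ℝ) := Nat.cast_nonneg _
      have step1 : ((K + n - 1).choose n : ℝ) ≤ ((K + n - 1 : ℕ) : ℝ) ^ n / (n.factorial : ℝ) :=
        Nat.choose_le_pow_div n (K + n - 1)
      have hfact : (n : ℝ) ^ n / (n.factorial : ℝ) ≤ e ^ n := by
        rw [he, Real.exp_one_pow]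
        exact Real.pow_div_factorial_le_exp _ hnR.le n
      have hfactpos : (0 : ℝ) < (n.factorial : ℝ) := by exact_mod_cast n.factorial_pos
      have step2 : ((K + n - 1 : ℕ) : ℝ) ^ n / (n.factorial : ℝ) ≤
          (((K + n - 1 : ℕ) : ℝ) * e / n) ^ n := by
        have hnn : (0 : ℝ) < (n : ℝ) ^ n := by positivity
        rw [div_le_iff₀ hfactpos]
        have expand : (((K + n - 1 : ℕ) : ℝ) * e / n) ^ n =
            ((K + n - 1 : ℕ) : ℝ) ^ n * (e ^ n / (n : ℝ) ^ n) := by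
          rw [div_pow, mul_pow]; ring
        rw [expand]
        have h3 : (n : ℝ) ^ n ≤ e ^ n * (n.factorial : ℝ) := by
          rw [div_le_iff₀ hfactpos] at hfact; linarith
        have h4 : e ^ n / (n : ℝ) ^ n ≥ 1 / (n.factorial : ℝ) := by
          rw [ge_iff_le, div_le_div_iff₀ hfactpos hnn]; linarith
        calc ((K + n - 1 : ℕ) : ℝ) ^ n
            = ((K + n - 1 : ℕ) : ℝ) ^ n * ((1 / (n.factorial : ℝ)) * (n.factorial : ℝ)) := by
              field_simp
          _ ≤ ((K + n - 1 : ℕ) : ℝ) ^ n * ((e ^ n / (n : ℝ) ^ n) * (n.factorial : ℝ)) := by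
              apply mul_le_mul_of_nonneg_left _ (by positivity)
              exact mul_le_mul_of_nonneg_right h4 hfactpos.le
          _ = ((K + n - 1 : ℕ) : ℝ) ^ n * (e ^ n / (n : ℝ) ^ n) * (n.factorial : ℝ) := by ring
      have step3 : (((K + n - 1 : ℕ) : ℝ) * e / n) ^ n ≤ A ^ n := by
        apply pow_le_pow_left₀ (by positivity)
        rw [hcastm, hA]
        rw [div_le_iff₀ hnR]
        have hKb : (K : ℝ) + (n : ℝ) - 1 ≤ (n : ℝ) / (2 * ε) + (n : ℝ) := by linarith
        have h5 : ((K : ℝ) + n - 1) * e ≤ ((n : ℝ) / (2 * ε) + n) * e := by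
          exact mul_le_mul_of_nonneg_right hKb hepos.le
        have h6 : ((n : ℝ) / (2 * ε) + n) * e ≤ (e + e / ε) * n := by
          have : (n : ℝ) / (2 * ε) * e ≤ e / ε * n := by
            rw [div_mul_eq_mul_div, div_mul_eq_mul_div, div_le_div_iff₀ (by positivity) hε1]
            nlinarith [mul_pos (mul_pos hepos hnR) hε1]
          nlinarith
        have h7 : (e + e / ε) * n ≤ (e + e / ε + e / n) * n := by
          have : (0:ℝ) ≤ e / n := by positivity
          nlinarith
        linarith
      have step4 : A ^ n ≤ (2 : ℝ) ^ σ := by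
        have hA0 : (0 : ℝ) < A := by linarith
        have e1 : A ^ n = (2 : ℝ) ^ (Real.logb 2 A * n) := by
          rw [Real.rpow_mul (by norm_num : (0:ℝ) ≤ 2), Real.rpow_logb two_pos (by norm_num) hA0,
            Real.rpow_natCast]
        have e2 : (2 : ℝ) ^ (Real.logb 2 A * n) ≤ (2 : ℝ) ^ ((σ : ℝ)) := by
          apply Real.rpow_le_rpow_of_exponent_le one_le_two
          rw [mul_comm]; exact hσval
        have e3 : (2 : ℝ) ^ ((σ : ℝ)) = (2 : ℝ) ^ σ := Real.rpow_natCast 2 σ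
        rw [e1, ← e3]; exact e2
      calc ((K + n - 1).choose n : ℝ) ≤ _ := step1
        _ ≤ _ := step2
        _ ≤ _ := step3
        _ ≤ _ := step4
    have : ((K + n - 1).choose n : ℝ) ≤ ((2 ^ σ : ℕ) : ℝ) := by push_cast; exact hreal
    exact_mod_cast this
  obtain ⟨emb⟩ := Function.Embedding.nonempty_of_card_le hcard
  -- quantization map
  set quant : (Fin n → ℝ) → Sym (Fin K) n := fun D =>
    ⟨((List.ofFn fun i => qidx K hKpos (D i)) : Multiset (Fin K)), by simp⟩ with hquant
  haveI : Nonempty (Sym (Fin K) n) := ⟨quant fun _ => 0⟩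
  set dec : Sym (Fin K) n → ℝ → ℝ := fun s q =>
    (s.1.map fun v => if qcenter K v ≤ q then (1:ℝ) else 0).sum with hdec
  refine ⟨fun D => emb (quant D), fun b => dec (Function.invFun emb b), ?_⟩
  intro D hD
  have hinj : Function.invFun emb (emb (quant D)) = quant D :=
    Function.leftInverse_invFun emb.injective (quant D)
  have hfq : ∀ q : ℝ, dec (Function.invFun emb (emb (quant D))) q =
      ∑ i, if qcenter K (qidx K hKpos (D i)) ≤ q then (1:ℝ) else 0 := by
    intro q
    rw [hinj, hdec, hquant]
    simp only [Multiset.map_coe, List.map_ofFn, Multiset.sum_coe]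
    rw [List.sum_ofFn]
    rfl
  -- pointwise bound then integrate
  set c : Fin n → ℝ := fun i => qcenter K (qidx K hKpos (D i)) with hc
  have hpoint : ∀ q : ℝ,
      ENNReal.ofReal |dec (Function.invFun emb (emb (quant D))) q - rank D q| ≤
        ∑ i, ENNReal.ofReal
          |(if c i ≤ q then (1:ℝ) else 0) - (if D i ≤ q then (1:ℝ) else 0)| := by
    intro q
    rw [hfq q]
    unfold rank
    rw [← Finset.sum_sub_distrib]
    calc ENNReal.ofReal |∑ i, ((if c i ≤ q then (1:ℝ) else 0) - (if D i ≤ q then (1:ℝ) else 0))|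
        ≤ ENNReal.ofReal (∑ i, |(if c i ≤ q then (1:ℝ) else 0) - (if D i ≤ q then (1:ℝ) else 0)|) :=
          ENNReal.ofReal_le_ofReal (Finset.abs_sum_le_sum_abs _ _)
      _ = ∑ i, ENNReal.ofReal
          |(if c i ≤ q then (1:ℝ) else 0) - (if D i ≤ q then (1:ℝ) else 0)| :=
          ENNReal.ofReal_sum_of_nonneg fun i _ => abs_nonneg _
  have hmeas : ∀ i : Fin n, Measurable fun q : ℝ =>
      ENNReal.ofReal |(if c i ≤ q then (1:ℝ) else 0) - (if D i ≤ q then (1:ℝ) else 0)| := by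
    intro i
    apply Measurable.ennreal_ofReal
    apply Measurable.abs
    apply Measurable.sub
    · exact measurable_one.ite measurableSet_Ici measurable_const
    · exact measurable_one.ite measurableSet_Ici measurable_const
  have hclose : ∀ i, |c i - D i| ≤ ε / n := by
    intro i
    have h1 : |c i - D i| ≤ 1 / (2 * K) :=
      qcenter_close K hKpos (D i) (hD i).1 (hD i).2
    have h2 : 1 / (2 * (K : ℝ)) ≤ ε / n := by
      rw [div_le_div_iff₀ (by positivity) hnR]
      have : (n : ℝ) ≤ 2 * ε * K := by
        rw [div_le_iff₀ (by positivity)] at hKge; linarith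
      linarith
    linarith
  calc ∫⁻ q in Set.Icc (0:ℝ) 1,
        ENNReal.ofReal |dec (Function.invFun emb (emb (quant D))) q - rank D q|
      ≤ ∫⁻ q in Set.Icc (0:ℝ) 1, ∑ i, ENNReal.ofReal
          |(if c i ≤ q then (1:ℝ) else 0) - (if D i ≤ q then (1:ℝ) else 0)| :=
        lintegral_mono fun q => hpoint q
    _ = ∑ i, ∫⁻ q in Set.Icc (0:ℝ) 1, ENNReal.ofReal
          |(if c i ≤ q then (1:ℝ) else 0) - (if D i ≤ q then (1:ℝ) else 0)| :=
        lintegral_finset_sum _ fun i _ => hmeas i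
    _ ≤ ∑ i : Fin n, ENNReal.ofReal (ε / n) := by
        apply Finset.sum_le_sum
        intro i _
        calc ∫⁻ q in Set.Icc (0:ℝ) 1, ENNReal.ofReal
              |(if c i ≤ q then (1:ℝ) else 0) - (if D i ≤ q then (1:ℝ) else 0)|
            ≤ ENNReal.ofReal |c i - D i| := lintegral_ind_diff_le (c i) (D i)
          _ ≤ ENNReal.ofReal (ε / n) := ENNReal.ofReal_le_ofReal (hclose i)
    _ = ENNReal.ofReal ε := by
        rw [Finset.sum_const, Finset.card_univ, Fintype.card_fin, nsmul_eq_mul,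
          ← ENNReal.ofReal_natCast n, ← ENNReal.ofReal_mul (Nat.cast_nonneg n)]
        congr 1
        field_simp
end

section
/- Let n, d be positive integers and ε a real number with 0 < ε ≤ n. There exist a nonnegative integer σ ≤ ⌈n·log₂(e·2^d·(d+1)^d·n^{d−1}/ε^d + e − e/n)⌉ and a σ-bit training/inference pair (ρ, f̂) for datasets in [0,1]^{n×d} with query domain Q_c such that for every dataset D ∈ [0,1]^{n×d}, ∫_{Q_c} |f̂(ρ(D))(q) − c_D(q)| dq ≤ ε. -/
open MeasureTheory
open scoped ENNReal

/-- The query domain `Q_c` for `d`-dimensional range queries: a query is a pair `(c, r)`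
with `r_j ∈ [0,1]` and `c_j ∈ [−r_j, 1−r_j]` for all `j`. -/
def Qc (d : ℕ) : Set ((Fin d → ℝ) × (Fin d → ℝ)) :=
  {q | ∀ j, q.2 j ∈ Set.Icc (0 : ℝ) 1 ∧ q.1 j ∈ Set.Icc (-(q.2 j)) (1 - q.2 j)}

/-- The cardinality function of a `d`-dimensional dataset:
`c_D(q) = Σ_i 1[c_j ≤ D_{i,j} ≤ c_j + r_j for all j]`. -/
noncomputable def cardF {n d : ℕ} (D : Fin n → Fin d → ℝ)
    (q : (Fin d → ℝ) × (Fin d → ℝ)) : ℝ :=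
  ∑ i, if ∀ j, q.1 j ≤ D i j ∧ D i j ≤ q.1 j + q.2 j then 1 else 0

private lemma abs_ind_sub_ind_le (d : ℕ) (x x' : Fin d → ℝ) (hx : ∀ j, x' j ≤ x j)
    (q : (Fin d → ℝ) × (Fin d → ℝ)) :
    ENNReal.ofReal |(if ∀ j, q.1 j ≤ x' j ∧ x' j ≤ q.1 j + q.2 j then (1:ℝ) else 0)
        - (if ∀ j, q.1 j ≤ x j ∧ x j ≤ q.1 j + q.2 j then (1:ℝ) else 0)| ≤
      ∑ j : Fin d,
        (Set.indicator {q' : (Fin d → ℝ) × (Fin d → ℝ) | q'.1 j ∈ Set.Icc (x' j) (x j)}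
            (fun _ => (1:ℝ≥0∞)) q
          + Set.indicator {q' : (Fin d → ℝ) × (Fin d → ℝ) | q'.1 j + q'.2 j ∈ Set.Icc (x' j) (x j)}
            (fun _ => (1:ℝ≥0∞)) q) := by
  classical
  by_cases h' : ∀ j, q.1 j ≤ x' j ∧ x' j ≤ q.1 j + q.2 j
  · by_cases h : ∀ j, q.1 j ≤ x j ∧ x j ≤ q.1 j + q.2 j
    · simp [h, h']
    · obtain ⟨j₀, hj₀⟩ := not_forall.mp h
      have key : q ∈ {q' : (Fin d → ℝ) × (Fin d → ℝ) | q'.1 j₀ + q'.2 j₀ ∈ Set.Icc (x' j₀) (x j₀)} := by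
        rcases not_and_or.mp hj₀ with h1 | h2
        · exact absurd (le_trans (h' j₀).1 (hx j₀)) h1
        · exact ⟨(h' j₀).2, le_of_lt (lt_of_not_ge h2)⟩
      have h1 : (1:ℝ≥0∞) ≤ Set.indicator {q' : (Fin d → ℝ) × (Fin d → ℝ) | q'.1 j₀ ∈ Set.Icc (x' j₀) (x j₀)}
            (fun _ => (1:ℝ≥0∞)) q
          + Set.indicator {q' : (Fin d → ℝ) × (Fin d → ℝ) | q'.1 j₀ + q'.2 j₀ ∈ Set.Icc (x' j₀) (x j₀)}
            (fun _ => (1:ℝ≥0∞)) q := by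
        rw [Set.indicator_of_mem key]; exact le_add_self
      rw [if_pos h', if_neg h]
      calc ENNReal.ofReal |(1:ℝ) - 0| = 1 := by norm_num
        _ ≤ _ := le_trans h1 (Finset.single_le_sum (f := fun j => Set.indicator {q' : (Fin d → ℝ) × (Fin d → ℝ) | q'.1 j ∈ Set.Icc (x' j) (x j)}
            (fun _ => (1:ℝ≥0∞)) q
          + Set.indicator {q' : (Fin d → ℝ) × (Fin d → ℝ) | q'.1 j + q'.2 j ∈ Set.Icc (x' j) (x j)}
            (fun _ => (1:ℝ≥0∞)) q) (fun j _ => zero_le) (Finset.mem_univ j₀))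
  · by_cases h : ∀ j, q.1 j ≤ x j ∧ x j ≤ q.1 j + q.2 j
    · obtain ⟨j₀, hj₀⟩ := not_forall.mp h'
      have key : q ∈ {q' : (Fin d → ℝ) × (Fin d → ℝ) | q'.1 j₀ ∈ Set.Icc (x' j₀) (x j₀)} := by
        rcases not_and_or.mp hj₀ with h1 | h2
        · exact ⟨le_of_lt (lt_of_not_ge h1), (h j₀).1⟩
        · exact absurd (le_trans (hx j₀) (h j₀).2) h2
      have h1 : (1:ℝ≥0∞) ≤ Set.indicator {q' : (Fin d → ℝ) × (Fin d → ℝ) | q'.1 j₀ ∈ Set.Icc (x' j₀) (x j₀)}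
            (fun _ => (1:ℝ≥0∞)) q
          + Set.indicator {q' : (Fin d → ℝ) × (Fin d → ℝ) | q'.1 j₀ + q'.2 j₀ ∈ Set.Icc (x' j₀) (x j₀)}
            (fun _ => (1:ℝ≥0∞)) q := by
        rw [Set.indicator_of_mem key]; exact le_add_right (le_refl _)
      rw [if_neg h', if_pos h]
      calc ENNReal.ofReal |(0:ℝ) - 1| = 1 := by norm_num
        _ ≤ _ := le_trans h1 (Finset.single_le_sum (f := fun j => Set.indicator {q' : (Fin d → ℝ) × (Fin d → ℝ) | q'.1 j ∈ Set.Icc (x' j) (x j)}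
            (fun _ => (1:ℝ≥0∞)) q
          + Set.indicator {q' : (Fin d → ℝ) × (Fin d → ℝ) | q'.1 j + q'.2 j ∈ Set.Icc (x' j) (x j)}
            (fun _ => (1:ℝ≥0∞)) q) (fun j _ => zero_le) (Finset.mem_univ j₀))
    · simp [h, h']

private lemma volume_bad (d : ℕ) (j : Fin d) (a b c : ℝ) :
    volume ((⋂ j', {q : (Fin d → ℝ) × (Fin d → ℝ) | q.2 j' ∈ Set.Icc (0:ℝ) 1}) ∩
      ((⋂ j', {q : (Fin d → ℝ) × (Fin d → ℝ) | q.1 j' + q.2 j' ∈ Set.Icc (0:ℝ) 1}) ∩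
      {q : (Fin d → ℝ) × (Fin d → ℝ) | q.1 j + c * q.2 j ∈ Set.Icc a b}))
      ≤ ENNReal.ofReal (b - a) := by
  set E := (⋂ j', {q : (Fin d → ℝ) × (Fin d → ℝ) | q.2 j' ∈ Set.Icc (0:ℝ) 1}) ∩
      ((⋂ j', {q : (Fin d → ℝ) × (Fin d → ℝ) | q.1 j' + q.2 j' ∈ Set.Icc (0:ℝ) 1}) ∩
      {q : (Fin d → ℝ) × (Fin d → ℝ) | q.1 j + c * q.2 j ∈ Set.Icc a b}) with hE_def
  have hE : MeasurableSet E := by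
    refine MeasurableSet.inter ?_ (MeasurableSet.inter ?_ ?_)
    · exact MeasurableSet.iInter fun j' =>
        ((measurable_pi_apply j').comp measurable_snd) measurableSet_Icc
    · exact MeasurableSet.iInter fun j' =>
        (((measurable_pi_apply j').comp measurable_fst).add
          ((measurable_pi_apply j').comp measurable_snd)) measurableSet_Icc
    · exact (((measurable_pi_apply j).comp measurable_fst).add
          (measurable_const.mul ((measurable_pi_apply j).comp measurable_snd))) measurableSet_Icc
  have hbox : MeasurableSet (Set.univ.pi fun _ : Fin d => Set.Icc (0:ℝ) 1) :=
    MeasurableSet.univ_pi fun _ => measurableSet_Icc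
  rw [Measure.volume_eq_prod, Measure.prod_apply_symm hE]
  have hbound : ∀ r : Fin d → ℝ, volume ((fun x => (x, r)) ⁻¹' E)
      ≤ (Set.univ.pi fun _ : Fin d => Set.Icc (0:ℝ) 1).indicator
          (fun _ => ENNReal.ofReal (b - a)) r := by
    intro r
    by_cases hr : r ∈ Set.univ.pi fun _ : Fin d => Set.Icc (0:ℝ) 1
    · rw [Set.indicator_of_mem hr]
      classical
      set I : Fin d → Set ℝ := fun j' =>
        if j' = j then Set.Icc (a - c * r j) (b - c * r j)
        else Set.Icc (-(r j')) (1 - r j') with hI_def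
      have hsub : ((fun x => (x, r)) ⁻¹' E) ⊆ Set.univ.pi I := by
        intro x hx
        simp only [hE_def, Set.mem_preimage, Set.mem_inter_iff, Set.mem_iInter,
          Set.mem_setOf_eq, Set.mem_Icc] at hx
        intro j' _
        by_cases hjj : j' = j
        · subst hjj
          simp only [hI_def, if_pos rfl, Set.mem_Icc]
          obtain ⟨h1, h2⟩ := hx.2.2
          constructor <;> linarith
        · simp only [hI_def, if_neg hjj, Set.mem_Icc]
          obtain ⟨h1, h2⟩ := hx.2.1 j'
          constructor <;> linarith
      refine le_trans (measure_mono hsub) ?_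
      rw [volume_pi_pi]
      rw [Finset.prod_eq_single_of_mem j (Finset.mem_univ j) ?_]
      · simp only [hI_def, if_pos rfl, Real.volume_Icc]
        ring_nf
        exact le_rfl
      · intro j' _ hjj
        simp only [hI_def, if_neg hjj, Real.volume_Icc]
        norm_num
    · have hempty : ((fun x => (x, r)) ⁻¹' E) = ∅ := by
        rw [Set.eq_empty_iff_forall_notMem]
        intro x hx
        simp only [hE_def, Set.mem_preimage, Set.mem_inter_iff, Set.mem_iInter,
          Set.mem_setOf_eq] at hx
        exact hr (fun j' _ => hx.1 j')
      rw [hempty, Set.indicator_of_notMem hr]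
      simp
  calc ∫⁻ r, volume ((fun x => (x, r)) ⁻¹' E)
      ≤ ∫⁻ r, (Set.univ.pi fun _ : Fin d => Set.Icc (0:ℝ) 1).indicator
          (fun _ => ENNReal.ofReal (b - a)) r := lintegral_mono hbound
    _ = ENNReal.ofReal (b - a) * volume (Set.univ.pi fun _ : Fin d => Set.Icc (0:ℝ) 1) :=
        lintegral_indicator_const hbox _
    _ ≤ ENNReal.ofReal (b - a) := by
        rw [volume_pi_pi]
        simp [Real.volume_Icc]

private noncomputable def rnd (m : ℕ) (x : ℝ) : ℕ := min ⌊x * m⌋₊ (m - 1)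

private noncomputable def unrnd (m : ℕ) (k : ℕ) : ℝ := k / m

private lemma rnd_lt (m : ℕ) (hm : 0 < m) (x : ℝ) : rnd m x < m := by
  have : min ⌊x * m⌋₊ (m - 1) ≤ m - 1 := min_le_right _ _
  unfold rnd; omega

private lemma unrnd_rnd_le (m : ℕ) (hm : 0 < m) (x : ℝ) (hx : 0 ≤ x) :
    unrnd m (rnd m x) ≤ x := by
  have hmR : (0:ℝ) < m := by exact_mod_cast hm
  rw [unrnd, div_le_iff₀ hmR]
  calc ((rnd m x : ℕ) : ℝ) ≤ (⌊x * m⌋₊ : ℝ) := by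
        exact_mod_cast min_le_left _ _
    _ ≤ x * m := Nat.floor_le (by positivity)

private lemma le_unrnd_rnd (m : ℕ) (hm : 0 < m) (x : ℝ) (hx1 : x ≤ 1) :
    x ≤ unrnd m (rnd m x) + 1 / m := by
  have hmR : (0:ℝ) < m := by exact_mod_cast hm
  rw [unrnd, ← add_div, le_div_iff₀ hmR]
  rcases le_or_gt ⌊x * m⌋₊ (m - 1) with h | h
  · rw [rnd, min_eq_left h]
    exact le_of_lt (Nat.lt_floor_add_one (x * m))
  · rw [rnd, min_eq_right h.le, Nat.cast_sub hm]
    push_cast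
    nlinarith

private lemma choose_le_main (n M : ℕ) (hn : 0 < n) :
    ((M + n - 1).choose n : ℝ) ≤ (Real.exp 1 * ((M + n - 1 : ℕ) : ℝ) / n) ^ n := by
  have hnR : (0:ℝ) < n := by exact_mod_cast hn
  have h1 : ((M + n - 1).choose n : ℝ) ≤ ((M + n - 1 : ℕ) : ℝ) ^ n / (n.factorial : ℝ) :=
    Nat.choose_le_pow_div n (M + n - 1)
  have h2 : (n:ℝ) ^ n / (n.factorial : ℝ) ≤ Real.exp n := by
    refine le_trans ?_ (Real.sum_le_exp_of_nonneg (by positivity) (n + 1))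
    exact Finset.single_le_sum (f := fun i => (n:ℝ) ^ i / (i.factorial : ℝ)) (fun i _ => by positivity)
      (Finset.self_mem_range_succ n)
  have hfac : (0:ℝ) < (n.factorial : ℝ) := by exact_mod_cast Nat.factorial_pos n
  have h3 : (1:ℝ) / (n.factorial : ℝ) ≤ Real.exp n / (n:ℝ) ^ n := by
    rw [div_le_div_iff₀ hfac (by positivity), one_mul]
    rw [div_le_iff₀ hfac] at h2
    nlinarith
  calc ((M + n - 1).choose n : ℝ) ≤ ((M + n - 1 : ℕ) : ℝ) ^ n / (n.factorial : ℝ) := h1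
    _ = ((M + n - 1 : ℕ) : ℝ) ^ n * (1 / (n.factorial : ℝ)) := by ring
    _ ≤ ((M + n - 1 : ℕ) : ℝ) ^ n * (Real.exp n / (n:ℝ) ^ n) := by
        exact mul_le_mul_of_nonneg_left h3 (by positivity)
    _ = (Real.exp 1 * ((M + n - 1 : ℕ) : ℝ) / n) ^ n := by
        rw [← Real.exp_one_pow]
        rw [div_pow, mul_pow]
        ring

/-- upper bound on the required model size for average-case (1-norm)
error in learned cardinality estimation. -/
theorem stmt_7 (n d : ℕ) (hn : 0 < n) (hd : 0 < d)
    (ε : ℝ) (hε1 : 0 < ε) (hε2 : ε ≤ (n : ℝ)) :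
    ∃ σ : ℕ, (σ : ℤ) ≤
      ⌈(n : ℝ) * Real.logb 2 (Real.exp 1 * 2 ^ d * ((d : ℝ) + 1) ^ d * (n : ℝ) ^ (d - 1) / ε ^ d
        + Real.exp 1 - Real.exp 1 / (n : ℝ))⌉ ∧
    ∃ (ρ : (Fin n → Fin d → ℝ) → (Fin σ → Bool))
      (fhat : (Fin σ → Bool) → (((Fin d → ℝ) × (Fin d → ℝ)) → ℝ)),
      ∀ D : Fin n → Fin d → ℝ, (∀ i j, D i j ∈ Set.Icc (0 : ℝ) 1) →
        ∫⁻ q in Qc d, ENNReal.ofReal |fhat (ρ D) q - cardF D q| ≤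
          ENNReal.ofReal ε := by
  classical
  have hnR : (0:ℝ) < n := by exact_mod_cast hn
  have hdR : (1:ℝ) ≤ d := by exact_mod_cast hd
  set m : ℕ := ⌊2 * ((d:ℝ) + 1) * n / ε⌋₊ with hm_def
  have harg : (4:ℝ) ≤ 2 * ((d:ℝ) + 1) * n / ε := by
    rw [le_div_iff₀ hε1]; nlinarith
  have hm4 : 4 ≤ m := Nat.le_floor (by exact_mod_cast harg)
  have hm_pos : 0 < m := by omega
  have hmR : (0:ℝ) < m := by exact_mod_cast hm_pos
  have hm_le : (m:ℝ) ≤ 2 * ((d:ℝ) + 1) * n / ε := Nat.floor_le (by positivity)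
  have hm_gt : 2 * (d:ℝ) * n / ε < m := by
    have h1 : 2 * ((d:ℝ) + 1) * n / ε - 1 < m := Nat.sub_one_lt_floor _
    have h2 : 2 * ((d:ℝ) + 1) * n / ε = 2 * (d:ℝ) * n / ε + 2 * n / ε := by ring
    have h3 : (2:ℝ) ≤ 2 * n / ε := by rw [le_div_iff₀ hε1]; linarith
    linarith
  set N : ℕ := (m ^ d + n - 1).choose n with hN_def
  have hMn1 : 1 ≤ m ^ d := Nat.one_le_pow _ _ hm_pos
  have hN1 : 0 < N := Nat.choose_pos (by omega)
  set A : ℝ := Real.exp 1 * 2 ^ d * ((d : ℝ) + 1) ^ d * (n : ℝ) ^ (d - 1) / ε ^ d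
        + Real.exp 1 - Real.exp 1 / (n : ℝ) with hA_def
  have hcast : ((m ^ d + n - 1 : ℕ) : ℝ) = (m:ℝ) ^ d + (n:ℝ) - 1 := by
    have h1 : (1:ℕ) ≤ m ^ d + n := by omega
    push_cast [Nat.cast_sub h1]
    ring
  have hMpos : (0:ℝ) < ((m ^ d + n - 1 : ℕ) : ℝ) := by
    exact_mod_cast (show 0 < m ^ d + n - 1 by omega)
  have hBpos : 0 < Real.exp 1 * ((m ^ d + n - 1 : ℕ) : ℝ) / n := by positivity
  have hBA : Real.exp 1 * ((m ^ d + n - 1 : ℕ) : ℝ) / n ≤ A := by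
    have e_pos := Real.exp_pos 1
    have hnd : (n:ℝ) ^ d = (n:ℝ) ^ (d - 1) * n := by
      rw [← pow_succ]
      congr 1
      omega
    have hpow : (m:ℝ) ^ d ≤ (2 * ((d:ℝ) + 1) * n / ε) ^ d :=
      pow_le_pow_left₀ (by positivity) hm_le d
    have hkey : (m:ℝ) ^ d / n ≤ 2 ^ d * ((d:ℝ) + 1) ^ d * (n:ℝ) ^ (d - 1) / ε ^ d := by
      have hexp : (2 * ((d:ℝ) + 1) * n / ε) ^ d
          = (2 ^ d * ((d:ℝ) + 1) ^ d * (n:ℝ) ^ (d - 1) / ε ^ d) * n := by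
        rw [div_pow, mul_pow, mul_pow, hnd]; ring
      rw [div_le_iff₀ hnR]
      calc (m:ℝ) ^ d ≤ _ := hpow
        _ = _ := hexp
    have hexpand : Real.exp 1 * ((m ^ d + n - 1 : ℕ) : ℝ) / n
        = Real.exp 1 * ((m:ℝ) ^ d / n) + Real.exp 1 - Real.exp 1 / n := by
      rw [hcast]; field_simp
    rw [hexpand, hA_def]
    have hmul := mul_le_mul_of_nonneg_left hkey e_pos.le
    have heq : Real.exp 1 * (2 ^ d * ((d:ℝ) + 1) ^ d * (n:ℝ) ^ (d - 1) / ε ^ d)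
        = Real.exp 1 * 2 ^ d * ((d:ℝ) + 1) ^ d * (n:ℝ) ^ (d - 1) / ε ^ d := by ring
    rw [heq] at hmul
    linarith
  have hNA : (N:ℝ) ≤ A ^ n := by
    calc (N:ℝ) ≤ (Real.exp 1 * ((m ^ d + n - 1 : ℕ) : ℝ) / n) ^ n := choose_le_main n (m ^ d) hn
      _ ≤ A ^ n := pow_le_pow_left₀ hBpos.le hBA n
  have hApos : 0 < A := lt_of_lt_of_le hBpos hBA
  have hA1 : 1 ≤ A := by
    by_contra hA
    push_neg at hA
    have h1 : A ^ n < 1 := pow_lt_one₀ hApos.le hA (by omega)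
    have h2 : (N:ℝ) < 1 := lt_of_le_of_lt hNA h1
    have h3 : N < 1 := by exact_mod_cast h2
    omega
  set σ : ℕ := Nat.clog 2 N with hσ_def
  have hlogb0 : 0 ≤ (n:ℝ) * Real.logb 2 A := by
    have := Real.logb_nonneg one_lt_two hA1
    positivity
  have hceil0 : (0:ℤ) ≤ ⌈(n : ℝ) * Real.logb 2 A⌉ := Int.ceil_nonneg hlogb0
  refine ⟨σ, ?_, ?_⟩
  · set t : ℕ := (⌈(n : ℝ) * Real.logb 2 A⌉).toNat with ht_def
    have ht : (t:ℤ) = ⌈(n : ℝ) * Real.logb 2 A⌉ := Int.toNat_of_nonneg hceil0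
    have hσt : σ ≤ t := by
      rw [hσ_def, Nat.clog_le_iff_le_pow one_lt_two]
      have hmain : (N:ℝ) ≤ (2:ℝ) ^ (t:ℕ) := by
        have htR : (n:ℝ) * Real.logb 2 A ≤ (t:ℝ) := by
          have h1 : ((n:ℝ) * Real.logb 2 A) ≤ (⌈(n : ℝ) * Real.logb 2 A⌉ : ℝ) := Int.le_ceil _
          rw [show ((t:ℕ):ℝ) = ((t:ℤ):ℝ) by push_cast; ring, ht]
          exact h1
        calc (N:ℝ) ≤ A ^ n := hNA
          _ = ((2:ℝ) ^ (Real.logb 2 A)) ^ (n:ℕ) := by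
              rw [Real.rpow_logb two_pos (by norm_num) hApos]
          _ = (2:ℝ) ^ ((n:ℝ) * Real.logb 2 A) := by
              rw [← Real.rpow_natCast ((2:ℝ) ^ (Real.logb 2 A)) n, ← Real.rpow_mul (by norm_num)]
              ring_nf
          _ ≤ (2:ℝ) ^ ((t:ℝ)) := Real.rpow_le_rpow_of_exponent_le one_le_two htR
          _ = (2:ℝ) ^ (t:ℕ) := Real.rpow_natCast 2 t
      exact_mod_cast hmain
    calc (σ:ℤ) ≤ (t:ℤ) := by exact_mod_cast hσt
      _ = _ := ht
  · -- construction
    have hcard : Fintype.card (Sym (Fin d → Fin m) n) = N := by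
      rw [Sym.card_sym_eq_choose, Fintype.card_fun]
      simp [Fintype.card_fin]
      exact hN_def.symm
    have hle2 : Fintype.card (Sym (Fin d → Fin m) n) ≤ Fintype.card (Fin σ → Bool) := by
      rw [hcard, Fintype.card_fun]
      simp only [Fintype.card_fin, Fintype.card_bool]
      exact Nat.le_pow_clog one_lt_two N
    obtain ⟨emb⟩ := Function.Embedding.nonempty_of_card_le hle2
    haveI hne : Nonempty (Sym (Fin d → Fin m) n) := ⟨Sym.replicate n (fun _ => ⟨0, hm_pos⟩)⟩
    refine ⟨fun D => emb ⟨Multiset.map (fun i (j : Fin d) =>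
        (⟨rnd m (D i j), rnd_lt m hm_pos _⟩ : Fin m)) Finset.univ.val, by simp⟩,
      fun b q => (Multiset.map (fun v : Fin d → Fin m =>
          if ∀ j, q.1 j ≤ unrnd m (v j) ∧ unrnd m (v j) ≤ q.1 j + q.2 j then (1:ℝ) else 0)
        ((Function.invFun emb b : Sym (Fin d → Fin m) n) : Multiset (Fin d → Fin m))).sum, ?_⟩
    intro D hD
    set D' : Fin n → Fin d → ℝ := fun i j => unrnd m (rnd m (D i j)) with hD'_def
    have hfhat : ∀ q : (Fin d → ℝ) × (Fin d → ℝ),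
        (Multiset.map (fun v : Fin d → Fin m =>
          if ∀ j, q.1 j ≤ unrnd m (v j) ∧ unrnd m (v j) ≤ q.1 j + q.2 j then (1:ℝ) else 0)
        ((Function.invFun emb (emb ⟨Multiset.map (fun i (j : Fin d) =>
            (⟨rnd m (D i j), rnd_lt m hm_pos _⟩ : Fin m)) Finset.univ.val, by simp⟩)
          : Sym (Fin d → Fin m) n) : Multiset (Fin d → Fin m))).sum = cardF D' q := by
      intro q
      erw [Function.leftInverse_invFun emb.injective]
      show (Multiset.map _ (Multiset.map (fun i (j : Fin d) =>
            (⟨rnd m (D i j), rnd_lt m hm_pos _⟩ : Fin m)) Finset.univ.val)).sum = _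
      rw [Multiset.map_map]
      rfl
    have hle' : ∀ i j, D' i j ≤ D i j := fun i j => unrnd_rnd_le m hm_pos _ (hD i j).1
    have hge' : ∀ i j, D i j ≤ D' i j + 1 / m := fun i j => le_unrnd_rnd m hm_pos _ (hD i j).2
    have hS1 : ∀ (i : Fin n) (j : Fin d), MeasurableSet
        {q' : (Fin d → ℝ) × (Fin d → ℝ) | q'.1 j ∈ Set.Icc (D' i j) (D i j)} :=
      fun i j => ((measurable_pi_apply j).comp measurable_fst) measurableSet_Icc
    have hS2 : ∀ (i : Fin n) (j : Fin d), MeasurableSet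
        {q' : (Fin d → ℝ) × (Fin d → ℝ) | q'.1 j + q'.2 j ∈ Set.Icc (D' i j) (D i j)} :=
      fun i j => (((measurable_pi_apply j).comp measurable_fst).add
        ((measurable_pi_apply j).comp measurable_snd)) measurableSet_Icc
    have hsub1 : ∀ (i : Fin n) (j : Fin d),
        {q' : (Fin d → ℝ) × (Fin d → ℝ) | q'.1 j ∈ Set.Icc (D' i j) (D i j)} ∩ Qc d ⊆
        (⋂ j', {q : (Fin d → ℝ) × (Fin d → ℝ) | q.2 j' ∈ Set.Icc (0:ℝ) 1}) ∩
        ((⋂ j', {q : (Fin d → ℝ) × (Fin d → ℝ) | q.1 j' + q.2 j' ∈ Set.Icc (0:ℝ) 1}) ∩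
        {q : (Fin d → ℝ) × (Fin d → ℝ) | q.1 j + 0 * q.2 j ∈ Set.Icc (D' i j) (D i j)}) := by
      intro i j q hq
      obtain ⟨hq1, hq2⟩ := hq
      refine ⟨Set.mem_iInter.mpr fun j' => (hq2 j').1, Set.mem_iInter.mpr fun j' => ?_, ?_⟩
      · obtain ⟨⟨hr0, hr1⟩, ⟨hc0, hc1⟩⟩ := hq2 j'
        exact ⟨by linarith, by linarith⟩
      · simpa using hq1
    have hsub2 : ∀ (i : Fin n) (j : Fin d),
        {q' : (Fin d → ℝ) × (Fin d → ℝ) | q'.1 j + q'.2 j ∈ Set.Icc (D' i j) (D i j)} ∩ Qc d ⊆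
        (⋂ j', {q : (Fin d → ℝ) × (Fin d → ℝ) | q.2 j' ∈ Set.Icc (0:ℝ) 1}) ∩
        ((⋂ j', {q : (Fin d → ℝ) × (Fin d → ℝ) | q.1 j' + q.2 j' ∈ Set.Icc (0:ℝ) 1}) ∩
        {q : (Fin d → ℝ) × (Fin d → ℝ) | q.1 j + 1 * q.2 j ∈ Set.Icc (D' i j) (D i j)}) := by
      intro i j q hq
      obtain ⟨hq1, hq2⟩ := hq
      refine ⟨Set.mem_iInter.mpr fun j' => (hq2 j').1, Set.mem_iInter.mpr fun j' => ?_, ?_⟩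
      · obtain ⟨⟨hr0, hr1⟩, ⟨hc0, hc1⟩⟩ := hq2 j'
        exact ⟨by linarith, by linarith⟩
      · simpa using hq1
    have hterm1 : ∀ (i : Fin n) (j : Fin d),
        ∫⁻ q in Qc d, ({q' : (Fin d → ℝ) × (Fin d → ℝ) | q'.1 j ∈ Set.Icc (D' i j) (D i j)}).indicator
          (fun _ => (1:ℝ≥0∞)) q ≤ ENNReal.ofReal (1 / m) := by
      intro i j
      rw [lintegral_indicator (hS1 i j), setLIntegral_one, Measure.restrict_apply (hS1 i j)]
      refine le_trans (measure_mono (hsub1 i j)) ?_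
      refine le_trans (volume_bad d j (D' i j) (D i j) 0) ?_
      exact ENNReal.ofReal_le_ofReal (by linarith [hge' i j])
    have hterm2 : ∀ (i : Fin n) (j : Fin d),
        ∫⁻ q in Qc d, ({q' : (Fin d → ℝ) × (Fin d → ℝ) | q'.1 j + q'.2 j ∈ Set.Icc (D' i j) (D i j)}).indicator
          (fun _ => (1:ℝ≥0∞)) q ≤ ENNReal.ofReal (1 / m) := by
      intro i j
      rw [lintegral_indicator (hS2 i j), setLIntegral_one, Measure.restrict_apply (hS2 i j)]
      refine le_trans (measure_mono (hsub2 i j)) ?_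
      refine le_trans (volume_bad d j (D' i j) (D i j) 1) ?_
      exact ENNReal.ofReal_le_ofReal (by linarith [hge' i j])
    have hpointwise : ∀ q : (Fin d → ℝ) × (Fin d → ℝ),
        ENNReal.ofReal |cardF D' q - cardF D q| ≤
        ∑ i : Fin n, ∑ j : Fin d,
          (({q' : (Fin d → ℝ) × (Fin d → ℝ) | q'.1 j ∈ Set.Icc (D' i j) (D i j)}).indicator
              (fun _ => (1:ℝ≥0∞)) q
            + ({q' : (Fin d → ℝ) × (Fin d → ℝ) | q'.1 j + q'.2 j ∈ Set.Icc (D' i j) (D i j)}).indicator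
              (fun _ => (1:ℝ≥0∞)) q) := by
      intro q
      have habs : |cardF D' q - cardF D q| ≤ ∑ i : Fin n,
          |(if ∀ j, q.1 j ≤ D' i j ∧ D' i j ≤ q.1 j + q.2 j then (1:ℝ) else 0)
            - (if ∀ j, q.1 j ≤ D i j ∧ D i j ≤ q.1 j + q.2 j then (1:ℝ) else 0)| := by
        rw [cardF, cardF, ← Finset.sum_sub_distrib]
        exact Finset.abs_sum_le_sum_abs _ _
      calc ENNReal.ofReal |cardF D' q - cardF D q|
          ≤ ENNReal.ofReal (∑ i : Fin n,
            |(if ∀ j, q.1 j ≤ D' i j ∧ D' i j ≤ q.1 j + q.2 j then (1:ℝ) else 0)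
              - (if ∀ j, q.1 j ≤ D i j ∧ D i j ≤ q.1 j + q.2 j then (1:ℝ) else 0)|) :=
            ENNReal.ofReal_le_ofReal habs
        _ = ∑ i : Fin n, ENNReal.ofReal
            |(if ∀ j, q.1 j ≤ D' i j ∧ D' i j ≤ q.1 j + q.2 j then (1:ℝ) else 0)
              - (if ∀ j, q.1 j ≤ D i j ∧ D i j ≤ q.1 j + q.2 j then (1:ℝ) else 0)| :=
            ENNReal.ofReal_sum_of_nonneg (fun i _ => abs_nonneg _)
        _ ≤ _ := Finset.sum_le_sum fun i _ => abs_ind_sub_ind_le d (D i) (D' i) (hle' i) q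
    calc ∫⁻ q in Qc d, ENNReal.ofReal
          |(Multiset.map (fun v : Fin d → Fin m =>
            if ∀ j, q.1 j ≤ unrnd m (v j) ∧ unrnd m (v j) ≤ q.1 j + q.2 j then (1:ℝ) else 0)
          ((Function.invFun emb (emb ⟨Multiset.map (fun i (j : Fin d) =>
              (⟨rnd m (D i j), rnd_lt m hm_pos _⟩ : Fin m)) Finset.univ.val, by simp⟩)
            : Sym (Fin d → Fin m) n) : Multiset (Fin d → Fin m))).sum - cardF D q|
        = ∫⁻ q in Qc d, ENNReal.ofReal |cardF D' q - cardF D q| := by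
          exact lintegral_congr fun q => by rw [hfhat q]
      _ ≤ ∫⁻ q in Qc d, ∑ i : Fin n, ∑ j : Fin d,
          (({q' : (Fin d → ℝ) × (Fin d → ℝ) | q'.1 j ∈ Set.Icc (D' i j) (D i j)}).indicator
              (fun _ => (1:ℝ≥0∞)) q
            + ({q' : (Fin d → ℝ) × (Fin d → ℝ) | q'.1 j + q'.2 j ∈ Set.Icc (D' i j) (D i j)}).indicator
              (fun _ => (1:ℝ≥0∞)) q) := lintegral_mono hpointwise
      _ = ∑ i : Fin n, ∑ j : Fin d, ((∫⁻ q in Qc d,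
            ({q' : (Fin d → ℝ) × (Fin d → ℝ) | q'.1 j ∈ Set.Icc (D' i j) (D i j)}).indicator
              (fun _ => (1:ℝ≥0∞)) q)
          + ∫⁻ q in Qc d,
            ({q' : (Fin d → ℝ) × (Fin d → ℝ) | q'.1 j + q'.2 j ∈ Set.Icc (D' i j) (D i j)}).indicator
              (fun _ => (1:ℝ≥0∞)) q) := by
          erw [lintegral_finset_sum _ (fun i _ => Finset.measurable_sum _ (fun j _ =>
            (measurable_const.indicator (hS1 i j)).add (measurable_const.indicator (hS2 i j))))]
          refine Finset.sum_congr rfl fun i _ => ?_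
          erw [lintegral_finset_sum _ (fun j _ =>
            (measurable_const.indicator (hS1 i j)).add (measurable_const.indicator (hS2 i j)))]
          refine Finset.sum_congr rfl fun j _ => ?_
          exact lintegral_add_left (measurable_const.indicator (hS1 i j)) _
      _ ≤ ∑ _i : Fin n, ∑ _j : Fin d, (ENNReal.ofReal (1 / m) + ENNReal.ofReal (1 / m)) :=
          Finset.sum_le_sum fun i _ => Finset.sum_le_sum fun j _ =>
            add_le_add (hterm1 i j) (hterm2 i j)
      _ ≤ ENNReal.ofReal ε := by
          rw [Finset.sum_const, Finset.sum_const, Finset.card_univ, Finset.card_univ,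
            Fintype.card_fin, Fintype.card_fin, smul_smul, nsmul_eq_mul,
            ← ENNReal.ofReal_add (by positivity) (by positivity)]
          rw [show ((n * d : ℕ) : ℝ≥0∞) = ENNReal.ofReal ((n * d : ℕ) : ℝ) by
            rw [ENNReal.ofReal_natCast]]
          rw [← ENNReal.ofReal_mul (by positivity)]
          refine ENNReal.ofReal_le_ofReal ?_
          push_cast
          rw [div_lt_iff₀ hε1] at hm_gt
          have hfinal : (n:ℝ) * d * (1 / m + 1 / m) = 2 * d * n / m := by ring
          rw [hfinal, div_le_iff₀ hmR]
          nlinarith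
end

section
/- Let n, d be positive integers and ε a real number with 0 < ε ≤ n. There exist a nonnegative integer σ ≤ ⌈n·log₂(e·(2(d+2)/ε)^{d+1}·n^d + e − e/n)⌉ and a σ-bit training/inference pair (ρ, f̂) for datasets in [0,1]^{n×(d+1)} with query domain Q_c such that for every dataset D ∈ [0,1]^{n×(d+1)}, ∫_{Q_c} |f̂(ρ(D))(q) − s_D(q)| dq ≤ ε. -/
open MeasureTheory
open scoped ENNReal

/-- The range-sum function of a `(d+1)`-dimensional dataset:
`s_D(q) = Σ_i 1[c_j ≤ D_{i,j} ≤ c_j + r_j for all j ∈ [d]] · D_{i,d+1}`. -/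
noncomputable def sumF {n d : ℕ} (D : Fin n → Fin (d + 1) → ℝ)
    (q : (Fin d → ℝ) × (Fin d → ℝ)) : ℝ :=
  ∑ i, if ∀ j : Fin d, q.1 j ≤ D i j.castSucc ∧ D i j.castSucc ≤ q.1 j + q.2 j then
    D i (Fin.last d) else 0

namespace Stmt9

noncomputable section

def box (d : ℕ) : Set (Fin d → ℝ) := Set.pi Set.univ fun _ => Set.Icc (0:ℝ) 1

lemma measurableSet_box (d : ℕ) : MeasurableSet (box d) :=
  MeasurableSet.univ_pi fun _ => measurableSet_Icc

lemma volume_box (d : ℕ) : volume (box d) = 1 := by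
  rw [box, volume_pi_pi]
  simp [Real.volume_Icc]

lemma volume_box_slab (d : ℕ) (j : Fin d) (a b : ℝ) :
    volume (box d ∩ {u : Fin d → ℝ | u j ∈ Set.Icc a b}) ≤ ENNReal.ofReal (b - a) := by
  have hset : box d ∩ {u : Fin d → ℝ | u j ∈ Set.Icc a b}
      = Set.pi Set.univ (fun k => if k = j then Set.Icc (0:ℝ) 1 ∩ Set.Icc a b
          else Set.Icc 0 1) := by
    ext u
    simp only [box, Set.mem_inter_iff, Set.mem_pi, Set.mem_univ, forall_true_left,
      Set.mem_setOf_eq]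
    constructor
    · rintro ⟨h1, h2⟩ k
      by_cases hk : k = j
      · subst hk; simp only [if_pos rfl, Set.mem_inter_iff]; exact ⟨h1 k, h2⟩
      · simpa [hk] using h1 k
    · intro h
      refine ⟨fun k => ?_, ?_⟩
      · have hk := h k
        split_ifs at hk with h'
        exacts [hk.1, hk]
      · have hk := h j
        simp only [if_pos rfl, Set.mem_inter_iff] at hk
        exact hk.2
  rw [hset, volume_pi_pi]
  rw [Finset.prod_eq_single j (fun b _ hb => by simp [hb, Real.volume_Icc]) (by simp)]
  simp only [if_pos rfl]
  exact (measure_mono Set.inter_subset_right).trans (le_of_eq Real.volume_Icc)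

lemma measurePreserving_shear (d : ℕ) :
    MeasurePreserving (fun p : (Fin d → ℝ) × (Fin d → ℝ) => (p.1 - p.2, p.2))
      volume volume := by
  rw [Measure.volume_eq_prod]
  exact measurePreserving_sub_prod volume volume

lemma measurableSet_Qc (d : ℕ) : MeasurableSet (Qc d) := by
  have h : Qc d = ⋂ j : Fin d,
      ({q : (Fin d → ℝ) × (Fin d → ℝ) | q.2 j ∈ Set.Icc (0:ℝ) 1} ∩
       ({q | -(q.2 j) ≤ q.1 j} ∩ {q | q.1 j ≤ 1 - q.2 j})) := by
    ext q
    simp only [Qc, Set.mem_setOf_eq, Set.mem_iInter, Set.mem_inter_iff, Set.mem_Icc, and_assoc]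
  rw [h]
  refine MeasurableSet.iInter fun j => ?_
  have h2j : Measurable fun q : (Fin d → ℝ) × (Fin d → ℝ) => q.2 j :=
    (measurable_pi_apply j).comp measurable_snd
  have h1j : Measurable fun q : (Fin d → ℝ) × (Fin d → ℝ) => q.1 j :=
    (measurable_pi_apply j).comp measurable_fst
  exact (h2j measurableSet_Icc).inter
    ((measurableSet_le h2j.neg h1j).inter (measurableSet_le h1j (measurable_const.sub h2j)))

lemma shear_preimage_Qc (d : ℕ) :
    (fun p : (Fin d → ℝ) × (Fin d → ℝ) => (p.1 - p.2, p.2)) ⁻¹' Qc d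
      = box d ×ˢ box d := by
  ext ⟨u, r⟩
  simp only [Set.mem_preimage, Qc, Set.mem_setOf_eq, Set.mem_prod, box, Set.mem_pi,
    Set.mem_univ, forall_true_left, Set.mem_Icc, Pi.sub_apply]
  constructor
  · intro h
    refine ⟨fun j => ?_, fun j => ?_⟩
    · obtain ⟨⟨hr0, hr1⟩, hu0, hu1⟩ := h j
      constructor <;> linarith
    · exact (h j).1
  · rintro ⟨hu, hr⟩ j
    obtain ⟨hu0, hu1⟩ := hu j
    exact ⟨hr j, by linarith, by linarith⟩

lemma volume_Qc (d : ℕ) : volume (Qc d) = 1 := by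
  rw [← (measurePreserving_shear d).measure_preimage (measurableSet_Qc d).nullMeasurableSet,
    shear_preimage_Qc, Measure.volume_eq_prod, Measure.prod_prod, volume_box, one_mul]

lemma volume_A2 (d : ℕ) (j : Fin d) (a b : ℝ) :
    volume ({q : (Fin d → ℝ) × (Fin d → ℝ) | q.1 j + q.2 j ∈ Set.Icc a b} ∩ Qc d)
      ≤ ENNReal.ofReal (b - a) := by
  have hA : MeasurableSet {q : (Fin d → ℝ) × (Fin d → ℝ) | q.1 j + q.2 j ∈ Set.Icc a b} := by
    have : Measurable fun q : (Fin d → ℝ) × (Fin d → ℝ) => q.1 j + q.2 j :=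
      ((measurable_pi_apply j).comp measurable_fst).add ((measurable_pi_apply j).comp measurable_snd)
    exact this measurableSet_Icc
  have hmeas := hA.inter (measurableSet_Qc d)
  rw [← (measurePreserving_shear d).measure_preimage hmeas.nullMeasurableSet]
  have hpre : (fun p : (Fin d → ℝ) × (Fin d → ℝ) => (p.1 - p.2, p.2)) ⁻¹'
      ({q : (Fin d → ℝ) × (Fin d → ℝ) | q.1 j + q.2 j ∈ Set.Icc a b} ∩ Qc d)
      = (box d ∩ {u : Fin d → ℝ | u j ∈ Set.Icc a b}) ×ˢ box d := by
    rw [Set.preimage_inter, shear_preimage_Qc]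
    ext ⟨u, r⟩
    simp only [Set.mem_inter_iff, Set.mem_preimage, Set.mem_setOf_eq, Set.mem_prod,
      Pi.sub_apply, Set.mem_Icc]
    constructor
    · rintro ⟨hab, hu, hr⟩
      refine ⟨⟨hu, ?_⟩, hr⟩
      constructor <;> linarith [hab.1, hab.2]
    · rintro ⟨⟨hu, hab⟩, hr⟩
      refine ⟨?_, hu, hr⟩
      constructor <;> linarith [hab.1, hab.2]
  rw [hpre, Measure.volume_eq_prod, Measure.prod_prod, volume_box, mul_one]
  exact volume_box_slab d j a b

lemma volume_A1 (d : ℕ) (j : Fin d) (a b : ℝ) :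
    volume ({q : (Fin d → ℝ) × (Fin d → ℝ) | q.1 j ∈ Set.Icc a b} ∩ Qc d)
      ≤ ENNReal.ofReal (b - a) := by
  have hA : MeasurableSet {q : (Fin d → ℝ) × (Fin d → ℝ) | q.1 j ∈ Set.Icc a b} :=
    ((measurable_pi_apply j).comp measurable_fst) measurableSet_Icc
  have hmeas := hA.inter (measurableSet_Qc d)
  rw [← (measurePreserving_shear d).measure_preimage hmeas.nullMeasurableSet]
  set s := (fun p : (Fin d → ℝ) × (Fin d → ℝ) => (p.1 - p.2, p.2)) ⁻¹'
      ({q : (Fin d → ℝ) × (Fin d → ℝ) | q.1 j ∈ Set.Icc a b} ∩ Qc d) with hs_def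
  have hs_meas : MeasurableSet s := (measurePreserving_shear d).measurable hmeas
  have hprod : volume s = ∫⁻ u, volume (Prod.mk u ⁻¹' s) := by
    rw [Measure.volume_eq_prod, Measure.prod_apply hs_meas]
  rw [hprod]
  have hbound : ∀ u : Fin d → ℝ, volume (Prod.mk u ⁻¹' s)
      ≤ (box d).indicator (fun _ => ENNReal.ofReal (b - a)) u := by
    intro u
    by_cases hu : u ∈ box d
    · rw [Set.indicator_of_mem hu]
      have hsub : Prod.mk u ⁻¹' s ⊆ box d ∩ {r : Fin d → ℝ | r j ∈ Set.Icc (u j - b) (u j - a)} := by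
        intro r hr
        simp only [hs_def, Set.mem_preimage, Set.mem_inter_iff, Set.mem_setOf_eq,
          Pi.sub_apply, Set.mem_Icc] at hr
        obtain ⟨⟨hab1, hab2⟩, hqc⟩ := hr
        have hrbox : r ∈ box d := by
          have hmem : (u, r) ∈ box d ×ˢ box d := by
            rw [← shear_preimage_Qc d]; exact hqc
          exact hmem.2
        exact ⟨hrbox, by simp only [Set.mem_setOf_eq, Set.mem_Icc]; constructor <;> linarith⟩
      refine (measure_mono hsub).trans ?_
      refine (volume_box_slab d j (u j - b) (u j - a)).trans (le_of_eq ?_)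
      congr 1; ring
    · have hempty : Prod.mk u ⁻¹' s = ∅ := by
        ext r
        simp only [hs_def, Set.mem_preimage, Set.mem_inter_iff, Set.mem_empty_iff_false,
          iff_false, not_and]
        intro _ hqc
        have hmem : (u, r) ∈ box d ×ˢ box d := by
          rw [← shear_preimage_Qc d]; exact hqc
        exact hu hmem.1
      rw [hempty, Set.indicator_of_notMem hu]
      simp
  calc (∫⁻ u, volume (Prod.mk u ⁻¹' s)) ≤ ∫⁻ u, (box d).indicator (fun _ => ENNReal.ofReal (b - a)) u :=
        lintegral_mono hbound
    _ = ENNReal.ofReal (b - a) * volume (box d) := lintegral_indicator_const (measurableSet_box d) _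
    _ = ENNReal.ofReal (b - a) := by rw [volume_box, mul_one]


def quant (m : ℕ) (hm : 0 < m) (x : ℝ) : Fin m :=
  ⟨min ⌊x * m⌋₊ (m - 1), lt_of_le_of_lt (min_le_right _ _) (Nat.sub_lt hm one_pos)⟩

def center (m : ℕ) (k : Fin m) : ℝ := ((k : ℕ) + 1/2) / m

lemma center_mem (m : ℕ) (hm : 0 < m) (k : Fin m) : center m k ∈ Set.Icc (0:ℝ) 1 := by
  have hmR : (0:ℝ) < m := by exact_mod_cast hm
  have hk : ((k:ℕ):ℝ) + 1 ≤ m := by exact_mod_cast k.isLt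
  constructor
  · apply div_nonneg (by positivity) hmR.le
  · rw [center, div_le_one hmR]; linarith

lemma quant_close (m : ℕ) (hm : 0 < m) (x : ℝ) (hx : x ∈ Set.Icc (0:ℝ) 1) :
    |x - center m (quant m hm x)| ≤ 1 / (2 * m) := by
  have hmR : (0:ℝ) < m := by exact_mod_cast hm
  set k : ℕ := min ⌊x * m⌋₊ (m - 1) with hk
  have h1 : (k:ℝ) ≤ x * m := by
    by_cases hcase : ⌊x * m⌋₊ ≤ m - 1
    · rw [hk, min_eq_left hcase]
      exact Nat.floor_le (mul_nonneg hx.1 hmR.le)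
    · push_neg at hcase
      rw [hk, min_eq_right (le_of_lt hcase)]
      have hfloor : (m:ℝ) ≤ x * m ∨ True := Or.inr trivial
      -- m - 1 < ⌊x*m⌋₊ means m ≤ ⌊x*m⌋₊, so m ≤ x*m ... but easier: k = m-1 ≤ x*m?
      -- from hcase : m - 1 < ⌊x*m⌋₊, so m - 1 + 1 ≤ ⌊x*m⌋₊ hence (m-1:ℝ) < ⌊⌋ ≤ x*m? no, floor ≤ x*m
      have : (m - 1 : ℕ) < ⌊x * m⌋₊ := hcase
      have h2 : ((m - 1 : ℕ):ℝ) < ⌊x * m⌋₊ := by exact_mod_cast this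
      have h3 : (⌊x * m⌋₊ : ℝ) ≤ x * m := Nat.floor_le (mul_nonneg hx.1 hmR.le)
      linarith
  have h2 : x * m ≤ (k:ℝ) + 1 := by
    by_cases hcase : ⌊x * m⌋₊ ≤ m - 1
    · rw [hk, min_eq_left hcase]
      exact le_of_lt (Nat.lt_floor_add_one (x * m))
    · push_neg at hcase
      rw [hk, min_eq_right (le_of_lt hcase)]
      have hcast : ((m - 1 : ℕ):ℝ) = (m:ℝ) - 1 := by
        rw [Nat.cast_sub hm]; simp
      rw [hcast]
      have : x * m ≤ m := by nlinarith [hx.2, hmR]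
      linarith
  have hc : center m (quant m hm x) = ((k:ℝ) + 1/2) / m := rfl
  rw [hc]
  have hsub : x - ((k:ℝ) + 1/2) / m = (x * m - ((k:ℝ) + 1/2)) / m := by
    field_simp
  rw [hsub, abs_div, abs_of_pos hmR]
  rw [div_le_div_iff₀ hmR (by positivity)]
  have habs : |x * m - ((k:ℝ) + 1/2)| ≤ 1/2 := by
    rw [abs_le]; constructor <;> linarith
  calc |x * m - ((k:ℝ) + 1/2)| * (2 * m) ≤ (1/2) * (2 * m) := by
        apply mul_le_mul_of_nonneg_right habs (by positivity)
    _ = 1 * m := by ring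

def symOf {α : Type*} (n : ℕ) (f : Fin n → α) : Sym α n :=
  ⟨(List.ofFn f : List α), by simp⟩

def decode {α : Type*} {n : ℕ} (s : Sym α n) : Fin n → α :=
  fun i => s.1.toList.get (Fin.cast (by rw [Multiset.length_toList]; exact s.2.symm) i)

lemma ofFn_decode {α : Type*} {n : ℕ} (s : Sym α n) :
    (List.ofFn (decode s) : Multiset α) = s.1 := by
  have h : List.ofFn (decode s) = s.1.toList := by
    apply List.ext_getElem
    · simp [Multiset.length_toList, s.2]
    · intro i h1 h2
      simp [decode, List.getElem_ofFn, List.get_eq_getElem]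
      rfl
  rw [h, Multiset.coe_toList]

lemma ofFn_map_coe {β γ : Type*} {n : ℕ} (g : β → γ) (h : Fin n → β) :
    (List.ofFn (fun i => g (h i)) : Multiset γ) = Multiset.map g (List.ofFn h : Multiset β) := by
  rw [Multiset.map_coe, List.map_ofFn]
  rfl

lemma ofFn_comp_decode {β γ : Type*} {n : ℕ} (g : β → γ) (f : Fin n → β) :
    (List.ofFn (fun i => g (decode (symOf n f) i)) : Multiset γ)
      = (List.ofFn (fun i => g (f i)) : Multiset γ) := by
  rw [ofFn_map_coe g (fun i => decode (symOf n f) i), ofFn_map_coe g f, ofFn_decode]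
  rfl

lemma sumF_congr {n d : ℕ} {D E : Fin n → Fin (d + 1) → ℝ}
    (h : (List.ofFn D : Multiset (Fin (d + 1) → ℝ)) = (List.ofFn E : Multiset (Fin (d + 1) → ℝ))) :
    sumF D = sumF E := by
  funext q
  have aux : ∀ F : Fin n → Fin (d + 1) → ℝ, sumF F q =
      ((List.ofFn F : Multiset (Fin (d + 1) → ℝ)).map (fun row =>
        if ∀ j : Fin d, q.1 j ≤ row j.castSucc ∧ row j.castSucc ≤ q.1 j + q.2 j
        then row (Fin.last d) else 0)).sum := by
    intro F
    rw [Multiset.map_coe, Multiset.sum_coe, List.map_ofFn, List.sum_ofFn]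
    rfl
  rw [aux D, aux E, h]

lemma pow_le_factorial_mul_exp (k : ℕ) : (k:ℝ)^k ≤ (Nat.factorial k : ℝ) * Real.exp 1 ^ k := by
  induction k with
  | zero => simp
  | succ k ih =>
    have hstep : ((k:ℝ) + 1)^k ≤ Real.exp 1 * (k:ℝ)^k := by
      rcases Nat.eq_zero_or_pos k with hk0 | hkpos
      · subst hk0
        have h := Real.exp_one_gt_d9
        norm_num
      · have hkR : (0:ℝ) < k := by exact_mod_cast hkpos
        have h1 : (1 + 1/(k:ℝ)) ≤ Real.exp (1/(k:ℝ)) := by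
          have := Real.add_one_le_exp (1/(k:ℝ))
          linarith
        have h2 : ((k:ℝ) + 1)^k = (k:ℝ)^k * (1 + 1/(k:ℝ))^k := by
          rw [← mul_pow]; congr 1; field_simp
        have h3 : (1 + 1/(k:ℝ))^k ≤ Real.exp (1/(k:ℝ)) ^ k :=
          pow_le_pow_left₀ (by positivity) h1 k
        have h4 : Real.exp (1/(k:ℝ)) ^ k = Real.exp 1 := by
          rw [← Real.exp_nat_mul]
          congr 1
          field_simp
        rw [h2]
        calc (k:ℝ)^k * (1 + 1/(k:ℝ))^k ≤ (k:ℝ)^k * Real.exp 1 := by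
              rw [← h4]; exact mul_le_mul_of_nonneg_left h3 (by positivity)
          _ = Real.exp 1 * (k:ℝ)^k := by ring
    have hcast : ((k+1 : ℕ):ℝ) = (k:ℝ) + 1 := by push_cast; ring
    rw [hcast]
    have : ((k:ℝ) + 1)^(k+1) = ((k:ℝ) + 1) * ((k:ℝ)+1)^k := by ring
    rw [this]
    have hfact : (Nat.factorial (k+1) : ℝ) = ((k:ℝ)+1) * Nat.factorial k := by
      rw [Nat.factorial_succ]; push_cast; ring
    rw [hfact]
    calc ((k:ℝ) + 1) * ((k:ℝ)+1)^k ≤ ((k:ℝ)+1) * (Real.exp 1 * (k:ℝ)^k) :=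
          mul_le_mul_of_nonneg_left hstep (by positivity)
      _ ≤ ((k:ℝ)+1) * (Real.exp 1 * ((Nat.factorial k : ℝ) * Real.exp 1 ^ k)) := by
          apply mul_le_mul_of_nonneg_left _ (by positivity)
          exact mul_le_mul_of_nonneg_left ih (le_of_lt (Real.exp_pos 1))
      _ = ((k:ℝ)+1) * (Nat.factorial k : ℝ) * Real.exp 1 ^ (k+1) := by ring

lemma choose_le_exp_pow (N k : ℕ) (hk : 0 < k) :
    (N.choose k : ℝ) ≤ (Real.exp 1 * N / k) ^ k := by
  have hkR : (0:ℝ) < k := by exact_mod_cast hk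
  calc (N.choose k : ℝ) ≤ (N:ℝ)^k / Nat.factorial k := Nat.choose_le_pow_div k N
    _ ≤ (Real.exp 1 * N / k) ^ k := by
      rw [div_pow, mul_pow]
      rw [div_le_div_iff₀ (by exact_mod_cast Nat.factorial_pos k) (by positivity)]
      have h := pow_le_factorial_mul_exp k
      have hN : (0:ℝ) ≤ (N:ℝ)^k := by positivity
      nlinarith [mul_le_mul_of_nonneg_left h hN]

set_option maxHeartbeats 1000000 in
lemma sumF_decode (m n d : ℕ) (f : Fin n → Fin (d+1) → Fin m) :
    sumF (fun i => fun j => center m (decode (symOf n f) i j))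
      = sumF (fun i => fun j => center m (f i j)) := by
  apply sumF_congr
  exact ofFn_comp_decode (fun a j => center m (a j)) f

def S1 (d : ℕ) (x y : ℝ) (j : Fin d) : Set ((Fin d → ℝ) × (Fin d → ℝ)) :=
  {q | q.1 j ∈ Set.Icc (min x y) (max x y)}

def S2 (d : ℕ) (x y : ℝ) (j : Fin d) : Set ((Fin d → ℝ) × (Fin d → ℝ)) :=
  {q | q.1 j + q.2 j ∈ Set.Icc (min x y) (max x y)}

lemma measurableSet_S1 (d : ℕ) (x y : ℝ) (j : Fin d) : MeasurableSet (S1 d x y j) :=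
  ((measurable_pi_apply j).comp measurable_fst) measurableSet_Icc

lemma measurableSet_S2 (d : ℕ) (x y : ℝ) (j : Fin d) : MeasurableSet (S2 d x y j) :=
  (((measurable_pi_apply j).comp measurable_fst).add
    ((measurable_pi_apply j).comp measurable_snd)) measurableSet_Icc

lemma point_bound {d : ℕ} (q : (Fin d → ℝ) × (Fin d → ℝ)) (x y : Fin (d + 1) → ℝ)
    (hx : ∀ j, x j ∈ Set.Icc (0:ℝ) 1) (hy : ∀ j, y j ∈ Set.Icc (0:ℝ) 1) (δ : ℝ)
    (hxy : ∀ j, |x j - y j| ≤ δ) :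
    ENNReal.ofReal |(if ∀ j : Fin d, q.1 j ≤ y j.castSucc ∧ y j.castSucc ≤ q.1 j + q.2 j
        then y (Fin.last d) else 0)
      - (if ∀ j : Fin d, q.1 j ≤ x j.castSucc ∧ x j.castSucc ≤ q.1 j + q.2 j
        then x (Fin.last d) else 0)|
    ≤ ENNReal.ofReal δ + ∑ j : Fin d,
        ((S1 d (x j.castSucc) (y j.castSucc) j).indicator (fun _ => (1:ℝ≥0∞)) q
          + (S2 d (x j.castSucc) (y j.castSucc) j).indicator (fun _ => (1:ℝ≥0∞)) q) := by
  have habs : ∀ z : Fin (d+1) → ℝ, (∀ j, z j ∈ Set.Icc (0:ℝ) 1) → |z (Fin.last d)| ≤ 1 :=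
    fun z hz => abs_le.2 ⟨by linarith [(hz (Fin.last d)).1], (hz (Fin.last d)).2⟩
  by_cases hPy : ∀ j : Fin d, q.1 j ≤ y j.castSucc ∧ y j.castSucc ≤ q.1 j + q.2 j
  · by_cases hPx : ∀ j : Fin d, q.1 j ≤ x j.castSucc ∧ x j.castSucc ≤ q.1 j + q.2 j
    · rw [if_pos hPy, if_pos hPx]
      refine le_trans ?_ le_self_add
      apply ENNReal.ofReal_le_ofReal
      rw [abs_sub_comm]
      exact hxy _
    · -- y side in range, x side not
      have hj : ∃ j : Fin d, q ∈ S1 d (x j.castSucc) (y j.castSucc) j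
          ∨ q ∈ S2 d (x j.castSucc) (y j.castSucc) j := by
        push_neg at hPx
        obtain ⟨j, hjx⟩ := hPx
        refine ⟨j, ?_⟩
        by_cases hc : q.1 j ≤ x j.castSucc
        · right
          have h2 := hjx hc  -- q.1 j + q.2 j < x j.castSucc
          have hy2 := (hPy j).2
          constructor
          · exact le_trans (min_le_right _ _) hy2
          · exact le_trans (le_of_lt h2) (le_max_left _ _)
        · left
          push_neg at hc
          have hy1 := (hPy j).1
          constructor
          · exact le_trans (min_le_left _ _) (le_of_lt hc)
          · exact le_trans hy1 (le_max_right _ _)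
      obtain ⟨j, hj⟩ := hj
      have hone : (1:ℝ≥0∞) ≤ ∑ j : Fin d,
          ((S1 d (x j.castSucc) (y j.castSucc) j).indicator (fun _ => (1:ℝ≥0∞)) q
            + (S2 d (x j.castSucc) (y j.castSucc) j).indicator (fun _ => (1:ℝ≥0∞)) q) := by
        refine le_trans ?_ (Finset.single_le_sum (f := fun j =>
          ((S1 d (x j.castSucc) (y j.castSucc) j).indicator (fun _ => (1:ℝ≥0∞)) q
            + (S2 d (x j.castSucc) (y j.castSucc) j).indicator (fun _ => (1:ℝ≥0∞)) q))
          (fun _ _ => zero_le) (Finset.mem_univ j))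
        rcases hj with h | h
        · simp only [Set.indicator_of_mem h]; exact le_self_add
        · simp only [Set.indicator_of_mem h]; exact le_add_self
      calc ENNReal.ofReal |(if ∀ j : Fin d, q.1 j ≤ y j.castSucc ∧ y j.castSucc ≤ q.1 j + q.2 j
            then y (Fin.last d) else 0)
            - (if ∀ j : Fin d, q.1 j ≤ x j.castSucc ∧ x j.castSucc ≤ q.1 j + q.2 j
            then x (Fin.last d) else 0)| ≤ 1 := by
              rw [if_pos hPy, if_neg hPx, sub_zero]
              exact ENNReal.ofReal_le_one.2 (habs y hy)
        _ ≤ _ := le_trans hone le_add_self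
  · by_cases hPx : ∀ j : Fin d, q.1 j ≤ x j.castSucc ∧ x j.castSucc ≤ q.1 j + q.2 j
    · -- x side in range, y side not
      have hj : ∃ j : Fin d, q ∈ S1 d (x j.castSucc) (y j.castSucc) j
          ∨ q ∈ S2 d (x j.castSucc) (y j.castSucc) j := by
        push_neg at hPy
        obtain ⟨j, hjy⟩ := hPy
        refine ⟨j, ?_⟩
        by_cases hc : q.1 j ≤ y j.castSucc
        · right
          have h2 := hjy hc
          have hx2 := (hPx j).2
          constructor
          · exact le_trans (min_le_left _ _) hx2
          · exact le_trans (le_of_lt h2) (le_max_right _ _)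
        · left
          push_neg at hc
          have hx1 := (hPx j).1
          constructor
          · exact le_trans (min_le_right _ _) (le_of_lt hc)
          · exact le_trans hx1 (le_max_left _ _)
      obtain ⟨j, hj⟩ := hj
      have hone : (1:ℝ≥0∞) ≤ ∑ j : Fin d,
          ((S1 d (x j.castSucc) (y j.castSucc) j).indicator (fun _ => (1:ℝ≥0∞)) q
            + (S2 d (x j.castSucc) (y j.castSucc) j).indicator (fun _ => (1:ℝ≥0∞)) q) := by
        refine le_trans ?_ (Finset.single_le_sum (f := fun j =>
          ((S1 d (x j.castSucc) (y j.castSucc) j).indicator (fun _ => (1:ℝ≥0∞)) q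
            + (S2 d (x j.castSucc) (y j.castSucc) j).indicator (fun _ => (1:ℝ≥0∞)) q))
          (fun _ _ => zero_le) (Finset.mem_univ j))
        rcases hj with h | h
        · simp only [Set.indicator_of_mem h]; exact le_self_add
        · simp only [Set.indicator_of_mem h]; exact le_add_self
      calc ENNReal.ofReal |(if ∀ j : Fin d, q.1 j ≤ y j.castSucc ∧ y j.castSucc ≤ q.1 j + q.2 j
            then y (Fin.last d) else 0)
            - (if ∀ j : Fin d, q.1 j ≤ x j.castSucc ∧ x j.castSucc ≤ q.1 j + q.2 j
            then x (Fin.last d) else 0)| ≤ 1 := by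
              rw [if_neg hPy, if_pos hPx, zero_sub, abs_neg]
              exact ENNReal.ofReal_le_one.2 (habs x hx)
        _ ≤ _ := le_trans hone le_add_self
    · rw [if_neg hPy, if_neg hPx, sub_zero]
      simp

lemma key (n d : ℕ) (δ : ℝ) (hδ : 0 ≤ δ) (D E : Fin n → Fin (d + 1) → ℝ)
    (hD : ∀ i j, D i j ∈ Set.Icc (0:ℝ) 1) (hE : ∀ i j, E i j ∈ Set.Icc (0:ℝ) 1)
    (hDE : ∀ i j, |D i j - E i j| ≤ δ) :
    ∫⁻ q in Qc d, ENNReal.ofReal |sumF E q - sumF D q|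
      ≤ ENNReal.ofReal ((n:ℝ) * ((2 * (d:ℝ) + 1) * δ)) := by
  set F : Fin n → ((Fin d → ℝ) × (Fin d → ℝ)) → ℝ≥0∞ := fun i q =>
    ENNReal.ofReal δ + ∑ j : Fin d,
      ((S1 d (D i j.castSucc) (E i j.castSucc) j).indicator (fun _ => (1:ℝ≥0∞)) q
        + (S2 d (D i j.castSucc) (E i j.castSucc) j).indicator (fun _ => (1:ℝ≥0∞)) q)
    with hF
  have hFmeas : ∀ i, Measurable (F i) := by
    intro i
    exact measurable_const.add (Finset.measurable_sum _ fun j _ =>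
      ((measurable_const.indicator (measurableSet_S1 _ _ _ _)).add
        (measurable_const.indicator (measurableSet_S2 _ _ _ _)) : Measurable fun q =>
          (S1 d (D i j.castSucc) (E i j.castSucc) j).indicator (fun _ => (1:ℝ≥0∞)) q
            + (S2 d (D i j.castSucc) (E i j.castSucc) j).indicator (fun _ => (1:ℝ≥0∞)) q))
  have hpt : ∀ q, ENNReal.ofReal |sumF E q - sumF D q| ≤ ∑ i : Fin n, F i q := by
    intro q
    have h1 : |sumF E q - sumF D q| ≤ ∑ i : Fin n,
        |(if ∀ j : Fin d, q.1 j ≤ E i j.castSucc ∧ E i j.castSucc ≤ q.1 j + q.2 j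
            then E i (Fin.last d) else 0)
          - (if ∀ j : Fin d, q.1 j ≤ D i j.castSucc ∧ D i j.castSucc ≤ q.1 j + q.2 j
            then D i (Fin.last d) else 0)| := by
      rw [sumF, sumF, ← Finset.sum_sub_distrib]
      exact Finset.abs_sum_le_sum_abs _ _
    calc ENNReal.ofReal |sumF E q - sumF D q| ≤ ENNReal.ofReal (∑ i : Fin n, _) :=
          ENNReal.ofReal_le_ofReal h1
      _ = ∑ i : Fin n, ENNReal.ofReal _ := ENNReal.ofReal_sum_of_nonneg
          (fun _ _ => abs_nonneg _)
      _ ≤ ∑ i : Fin n, F i q := Finset.sum_le_sum fun i _ =>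
          point_bound q (D i) (E i) (hD i) (hE i) δ (hDE i)
  refine (lintegral_mono hpt).trans ?_
  rw [lintegral_finset_sum _ (fun i _ => hFmeas i)]
  have hint : ∀ i : Fin n, (∫⁻ q in Qc d, F i q) ≤ ENNReal.ofReal ((2 * (d:ℝ) + 1) * δ) := by
    intro i
    rw [hF]
    rw [lintegral_add_left measurable_const, setLIntegral_const, volume_Qc, mul_one,
      lintegral_finset_sum (f := fun j q =>
            (S1 d (D i j.castSucc) (E i j.castSucc) j).indicator (fun _ => (1:ℝ≥0∞)) q
              + (S2 d (D i j.castSucc) (E i j.castSucc) j).indicator (fun _ => (1:ℝ≥0∞)) q)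
        _ (fun j _ =>
        ((measurable_const.indicator (measurableSet_S1 _ _ _ _)).add
          (measurable_const.indicator (measurableSet_S2 _ _ _ _)) : Measurable fun q =>
            (S1 d (D i j.castSucc) (E i j.castSucc) j).indicator (fun _ => (1:ℝ≥0∞)) q
              + (S2 d (D i j.castSucc) (E i j.castSucc) j).indicator (fun _ => (1:ℝ≥0∞)) q))]
    have hj : ∀ j ∈ Finset.univ, (∫⁻ q in Qc d,
        ((S1 d (D i j.castSucc) (E i j.castSucc) j).indicator (fun _ => (1:ℝ≥0∞)) q
          + (S2 d (D i j.castSucc) (E i j.castSucc) j).indicator (fun _ => (1:ℝ≥0∞)) q))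
        ≤ ENNReal.ofReal δ + ENNReal.ofReal δ := by
      intro j _
      rw [lintegral_add_left (measurable_const.indicator (measurableSet_S1 _ _ _ _))]
      have hbd : ∀ (S : Set ((Fin d → ℝ) × (Fin d → ℝ))), MeasurableSet S →
          volume (S ∩ Qc d) ≤ ENNReal.ofReal δ →
          (∫⁻ q in Qc d, S.indicator (fun _ => (1:ℝ≥0∞)) q) ≤ ENNReal.ofReal δ := by
        intro S hS hvol
        rw [lintegral_indicator_const hS, one_mul, Measure.restrict_apply hS]
        exact hvol
      have habδ : ENNReal.ofReal (max (D i j.castSucc) (E i j.castSucc)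
          - min (D i j.castSucc) (E i j.castSucc)) ≤ ENNReal.ofReal δ := by
        apply ENNReal.ofReal_le_ofReal
        rw [max_sub_min_eq_abs, abs_sub_comm]
        exact hDE i j.castSucc
      exact add_le_add
        (hbd _ (measurableSet_S1 _ _ _ _) ((volume_A1 d j _ _).trans habδ))
        (hbd _ (measurableSet_S2 _ _ _ _) ((volume_A2 d j _ _).trans habδ))
    calc ENNReal.ofReal δ + ∑ j : Fin d, (∫⁻ q in Qc d,
          ((S1 d (D i j.castSucc) (E i j.castSucc) j).indicator (fun _ => (1:ℝ≥0∞)) q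
            + (S2 d (D i j.castSucc) (E i j.castSucc) j).indicator (fun _ => (1:ℝ≥0∞)) q))
        ≤ ENNReal.ofReal δ + ∑ j : Fin d, (ENNReal.ofReal δ + ENNReal.ofReal δ) :=
          add_le_add_right (Finset.sum_le_sum hj) _
      _ = ENNReal.ofReal ((2 * (d:ℝ) + 1) * δ) := by
          rw [Finset.sum_const, Finset.card_univ, Fintype.card_fin, nsmul_eq_mul,
            ← ENNReal.ofReal_add hδ hδ, ← ENNReal.ofReal_natCast d,
            ← ENNReal.ofReal_mul (Nat.cast_nonneg d),
            ← ENNReal.ofReal_add hδ (by positivity)]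
          congr 1
          ring
  calc ∑ i : Fin n, (∫⁻ q in Qc d, F i q)
      ≤ ∑ _i : Fin n, ENNReal.ofReal ((2 * (d:ℝ) + 1) * δ) :=
        Finset.sum_le_sum fun i _ => hint i
    _ = ENNReal.ofReal ((n:ℝ) * ((2 * (d:ℝ) + 1) * δ)) := by
        rw [Finset.sum_const, Finset.card_univ, Fintype.card_fin, nsmul_eq_mul,
          ← ENNReal.ofReal_natCast n, ← ENNReal.ofReal_mul (Nat.cast_nonneg n)]

end

end Stmt9

open Stmt9

/-- upper bound on the required model size for average-case (1-norm)
error in learned range-sum estimation. -/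
theorem stmt_9 (n d : ℕ) (hn : 0 < n) (hd : 0 < d)
    (ε : ℝ) (hε1 : 0 < ε) (hε2 : ε ≤ (n : ℝ)) :
    ∃ σ : ℕ, (σ : ℤ) ≤
      ⌈(n : ℝ) * Real.logb 2 (Real.exp 1 * (2 * ((d : ℝ) + 2) / ε) ^ (d + 1) * (n : ℝ) ^ d
        + Real.exp 1 - Real.exp 1 / (n : ℝ))⌉ ∧
    ∃ (ρ : (Fin n → Fin (d + 1) → ℝ) → (Fin σ → Bool))
      (fhat : (Fin σ → Bool) → (((Fin d → ℝ) × (Fin d → ℝ)) → ℝ)),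
      ∀ D : Fin n → Fin (d + 1) → ℝ, (∀ i j, D i j ∈ Set.Icc (0 : ℝ) 1) →
        ∫⁻ q in Qc d, ENNReal.ofReal |fhat (ρ D) q - sumF D q| ≤
          ENNReal.ofReal ε := by
  classical
  have hnR : (1:ℝ) ≤ n := by exact_mod_cast hn
  have hnR0 : (0:ℝ) < n := by exact_mod_cast hn
  have hne : (n:ℝ) ≠ 0 := ne_of_gt hnR0
  have hdR : (1:ℝ) ≤ d := by exact_mod_cast hd
  have hεn : (1:ℝ) ≤ (n:ℝ)/ε := (one_le_div hε1).mpr hε2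
  set C : ℝ := 2 * ((d:ℝ) + 2) / ε with hC
  have hCpos : 0 < C := by positivity
  have hCn : 1 ≤ C * n := by
    have h : C * n = 2 * ((d:ℝ)+2) * ((n:ℝ)/ε) := by rw [hC]; ring
    rw [h]; nlinarith
  set m : ℕ := ⌊C * (n:ℝ)⌋₊ with hm_def
  have hm : 0 < m := Nat.floor_pos.mpr hCn
  have hmR : (0:ℝ) < m := by exact_mod_cast hm
  set δ : ℝ := 1 / (2 * m) with hδ_def
  have hδpos : 0 < δ := by positivity
  have hmlow : (2*(d:ℝ)+3) * n / ε ≤ m := by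
    have h1 : C * n - 1 < m := by
      rw [hm_def]; exact Nat.sub_one_lt_floor (C * n)
    have h2 : C * n = (2*(d:ℝ)+4) * n / ε := by rw [hC]; ring
    have h4 : (2*(d:ℝ)+4)*n/ε - (2*(d:ℝ)+3)*n/ε = n/ε := by ring
    linarith
  have herr : (n:ℝ) * ((2*(d:ℝ)+1) * δ) ≤ ε := by
    rw [hδ_def, show (n:ℝ) * ((2*(d:ℝ)+1) * (1/(2*(m:ℝ)))) = ((n:ℝ)*(2*(d:ℝ)+1))/(2*(m:ℝ)) by ring]
    rw [div_le_iff₀ (by positivity)]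
    have h5 : ε * ((2*(d:ℝ)+3)*n/ε) = (2*(d:ℝ)+3)*n := by field_simp
    have h6 : ε * ((2*(d:ℝ)+3)*n/ε) ≤ ε * (m:ℝ) := by
      apply mul_le_mul_of_nonneg_left hmlow hε1.le
    nlinarith
  set e1 : ℝ := Real.exp 1 with he1
  have he1pos : 0 < e1 := Real.exp_pos 1
  have he1ge : (2:ℝ) ≤ e1 := by rw [he1]; linarith [Real.exp_one_gt_d9]
  set V : ℝ := e1 * C ^ (d+1) * (n:ℝ)^d + e1 - e1/(n:ℝ) with hV
  set M : ℕ := m^(d+1) with hM_def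
  have hM1 : 1 ≤ M := Nat.one_le_pow _ _ hm
  have hcard : Fintype.card (Sym (Fin (d+1) → Fin m) n) = (M + n - 1).choose n := by
    rw [Sym.card_sym_eq_multichoose, Nat.multichoose_eq]
    congr 2
    simp [hM_def]
  have hVn : (Fintype.card (Sym (Fin (d+1) → Fin m) n) : ℝ) ≤ V ^ n := by
    rw [hcard]
    refine (choose_le_exp_pow (M + n - 1) n hn).trans ?_
    have hcast : ((M + n - 1 : ℕ):ℝ) = (M:ℝ) + (n:ℝ) - 1 := by
      have h : 1 ≤ M + n := by omega
      push_cast [h]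
      ring
    apply pow_le_pow_left₀ (by positivity)
    rw [hcast, div_le_iff₀ hnR0]
    have hMle : (M:ℝ) ≤ C^(d+1) * (n:ℝ)^(d+1) := by
      have h1 : (M:ℝ) = (m:ℝ)^(d+1) := by rw [hM_def]; push_cast; ring
      have h2 : (m:ℝ) ≤ C * n := by rw [hm_def]; exact Nat.floor_le (by positivity)
      calc (M:ℝ) = (m:ℝ)^(d+1) := h1
        _ ≤ (C*(n:ℝ))^(d+1) := pow_le_pow_left₀ hmR.le h2 _
        _ = C^(d+1) * (n:ℝ)^(d+1) := mul_pow _ _ _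
    have hVmul : V * n = e1 * (C^(d+1) * (n:ℝ)^(d+1)) + e1 * n - e1 := by
      rw [hV]; field_simp; ring
    have hkey : e1 * (M:ℝ) ≤ e1 * (C^(d+1) * (n:ℝ)^(d+1)) :=
      mul_le_mul_of_nonneg_left hMle he1pos.le
    have hexp : e1 * ((M:ℝ) + (n:ℝ) - 1) = e1 * (M:ℝ) + e1 * (n:ℝ) - e1 := by ring
    linarith
  have hV1 : 1 ≤ V := by
    rcases Nat.lt_or_ge n 2 with hcase | hcase
    · have hn1 : (n:ℝ) = 1 := by
        have : n = 1 := by omega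
        exact_mod_cast this
      have hε2' : ε ≤ 1 := by rw [hn1] at hε2; exact hε2
      have hC6 : 1 ≤ C := by
        have : C = 2 * ((d:ℝ)+2) * (1/ε) := by rw [hC]; ring
        rw [this]
        have h1 : (1:ℝ) ≤ 1/ε := (one_le_div hε1).mpr hε2'
        nlinarith
      have hCp1 : 1 ≤ C^(d+1) := one_le_pow₀ hC6
      have hnd : (1:ℝ) ≤ (n:ℝ)^d := one_le_pow₀ hnR
      rw [hV, hn1, div_one, one_pow, mul_one]
      nlinarith [mul_le_mul_of_nonneg_left hCp1 he1pos.le]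
    · have h2n : (2:ℝ) ≤ n := by exact_mod_cast hcase
      have hdiv : e1/(n:ℝ) ≤ e1/2 := by gcongr
      have hX : 0 ≤ e1 * C^(d+1) * (n:ℝ)^d := by positivity
      rw [hV]
      linarith
  haveI hne' : Nonempty (Sym (Fin (d+1) → Fin m) n) := ⟨symOf n fun _ _ => ⟨0, hm⟩⟩
  set σ : ℕ := ⌈Real.logb 2 (Fintype.card (Sym (Fin (d+1) → Fin m) n) : ℝ)⌉₊ with hσ_def
  have hcardpos : (0:ℝ) < (Fintype.card (Sym (Fin (d+1) → Fin m) n) : ℝ) := by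
    exact_mod_cast Fintype.card_pos
  have hcard1 : (1:ℝ) ≤ (Fintype.card (Sym (Fin (d+1) → Fin m) n) : ℝ) := by
    exact_mod_cast Fintype.card_pos
  have hL0 : 0 ≤ Real.logb 2 (Fintype.card (Sym (Fin (d+1) → Fin m) n) : ℝ) :=
    Real.logb_nonneg one_lt_two hcard1
  have hσle : (σ:ℤ) ≤ ⌈(n:ℝ) * Real.logb 2 V⌉ := by
    rw [hσ_def, Int.natCast_ceil_eq_ceil hL0]
    apply Int.ceil_le_ceil
    have h := Real.logb_le_logb_of_le one_lt_two hcardpos hVn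
    rwa [Real.logb_pow] at h
  have hbits : Fintype.card (Sym (Fin (d+1) → Fin m) n) ≤ Fintype.card (Fin σ → Bool) := by
    have hcardfun : Fintype.card (Fin σ → Bool) = 2^σ := by simp
    rw [hcardfun]
    have h1 : (Fintype.card (Sym (Fin (d+1) → Fin m) n) : ℝ)
        = (2:ℝ) ^ (Real.logb 2 (Fintype.card (Sym (Fin (d+1) → Fin m) n) : ℝ)) :=
      (Real.rpow_logb (by norm_num) (by norm_num) hcardpos).symm
    have h2 : (2:ℝ) ^ (Real.logb 2 (Fintype.card (Sym (Fin (d+1) → Fin m) n) : ℝ))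
        ≤ (2:ℝ) ^ ((σ:ℕ):ℝ) :=
      Real.rpow_le_rpow_of_exponent_le one_le_two (by rw [hσ_def]; exact Nat.le_ceil _)
    have h3 : (2:ℝ) ^ ((σ:ℕ):ℝ) = ((2^σ : ℕ):ℝ) := by
      rw [Real.rpow_natCast]
      push_cast
      ring
    have hfin : (Fintype.card (Sym (Fin (d+1) → Fin m) n) : ℝ) ≤ ((2^σ : ℕ):ℝ) :=
      calc (Fintype.card (Sym (Fin (d+1) → Fin m) n) : ℝ)
          = (2:ℝ) ^ (Real.logb 2 (Fintype.card (Sym (Fin (d+1) → Fin m) n) : ℝ)) := h1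
        _ ≤ (2:ℝ) ^ ((σ:ℕ):ℝ) := h2
        _ = ((2^σ : ℕ):ℝ) := h3
    exact_mod_cast hfin
  obtain ⟨emb⟩ := Function.Embedding.nonempty_of_card_le hbits
  refine ⟨σ, hσle, fun D => emb (symOf n (fun i => fun j => quant m hm (D i j))),
    fun b => sumF (fun i => fun j => center m (decode (Function.invFun (⇑emb) b) i j)), ?_⟩
  intro D hD
  have hleft : Function.invFun (⇑emb) (emb (symOf n (fun i => fun j => quant m hm (D i j))))
      = symOf n (fun i => fun j => quant m hm (D i j)) :=
    Function.leftInverse_invFun emb.injective _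
  have hgoal_eq : sumF (fun i => fun j => center m (decode (Function.invFun (⇑emb)
      (emb (symOf n (fun i => fun j => quant m hm (D i j))))) i j))
      = sumF (fun i => fun j => center m (quant m hm (D i j))) := by
    rw [hleft]
    exact sumF_decode m n d _
  simp only [hgoal_eq]
  have hE : ∀ i j, (fun i => fun j => center m (quant m hm (D i j))) i j ∈ Set.Icc (0:ℝ) 1 :=
    fun i j => center_mem m hm _
  have hDE : ∀ i j, |D i j - (fun i => fun j => center m (quant m hm (D i j))) i j| ≤ δ :=
    fun i j => by simpa [hδ_def] using quant_close m hm (D i j) (hD i j)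
  exact (key n d δ hδpos.le D _ hD hE hDE).trans (ENNReal.ofReal_le_ofReal herr)
end

section
/- Let μ be a nonatomic (continuous) Borel probability measure on [0,1], n a positive integer, and ε a real number with 0 < ε ≤ n. There exist a nonnegative integer σ ≤ ⌈n·log₂(e + e/ε + e/n)⌉ and a σ-bit training/inference pair (ρ, f̂) for datasets in [0,1]^n with query domain [0,1] such that for every dataset D ∈ [0,1]^n, ∫_{[0,1]} |f̂(ρ(D))(q) − r_D(q)| dμ(q) ≤ ε. -/
open MeasureTheory

section AuxLemmas

open Set ProbabilityTheory Filter Nat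
open scoped ENNReal NNReal

lemma aux_pow_le_factorial_mul_exp : ∀ n : ℕ, (n : ℝ) ^ n ≤ (n ! : ℝ) * Real.exp 1 ^ n := by
  intro n
  induction n with
  | zero => simp
  | succ m ih =>
    have hkey : ((m : ℝ) + 1) ^ m ≤ (m : ℝ) ^ m * Real.exp 1 := by
      rcases Nat.eq_zero_or_pos m with hm | hm
      · subst hm; simpa using Real.one_le_exp zero_le_one
      · have hm0 : (0:ℝ) < m := by exact_mod_cast hm
        have h1 : (m : ℝ) + 1 ≤ (m : ℝ) * Real.exp (1 / m) := by
          have := Real.add_one_le_exp (1 / (m:ℝ))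
          calc (m:ℝ) + 1 = (m:ℝ) * (1/(m:ℝ) + 1) := by field_simp; ring
          _ ≤ (m:ℝ) * Real.exp (1/(m:ℝ)) := by
              apply mul_le_mul_of_nonneg_left this hm0.le
        calc ((m:ℝ)+1)^m ≤ ((m:ℝ) * Real.exp (1/m))^m := by
              apply pow_le_pow_left₀ (by positivity) h1
        _ = (m:ℝ)^m * Real.exp (1/m) ^ m := mul_pow _ _ _
        _ = (m:ℝ)^m * Real.exp 1 := by
            rw [← Real.exp_nat_mul]
            congr 2
            field_simp
    have hfact : ((m+1)! : ℝ) = ((m:ℝ)+1) * (m ! : ℝ) := by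
      rw [Nat.factorial_succ]; push_cast; ring
    have hpos : (0:ℝ) ≤ (m:ℝ) + 1 := by positivity
    calc ((m+1 : ℕ) : ℝ) ^ (m+1) = ((m:ℝ)+1) * ((m:ℝ)+1)^m := by push_cast; ring
    _ ≤ ((m:ℝ)+1) * ((m:ℝ)^m * Real.exp 1) := by
        apply mul_le_mul_of_nonneg_left hkey hpos
    _ ≤ ((m:ℝ)+1) * (((m ! : ℝ) * Real.exp 1 ^ m) * Real.exp 1) := by
        apply mul_le_mul_of_nonneg_left _ hpos
        apply mul_le_mul_of_nonneg_right ih (Real.exp_pos 1).le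
    _ = ((m+1)! : ℝ) * Real.exp 1 ^ (m+1) := by rw [hfact]; ring

lemma aux_leftLim_cdf (μ : Measure ℝ) [IsProbabilityMeasure μ] (hatom : ∀ x : ℝ, μ {x} = 0)
    (x : ℝ) : Function.leftLim (cdf μ) x = cdf μ x := by
  have h : μ {x} = ENNReal.ofReal (cdf μ x - Function.leftLim (cdf μ) x) := by
    conv_lhs => rw [← measure_cdf μ]
    exact (cdf μ).measure_singleton x
  rw [hatom x] at h
  have h2 : cdf μ x - Function.leftLim (cdf μ) x ≤ 0 := by
    by_contra h3
    push_neg at h3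
    rw [eq_comm, ENNReal.ofReal_eq_zero] at h
    linarith
  have h4 : Function.leftLim (cdf μ) x ≤ cdf μ x :=
    (cdf μ).mono.leftLim_le le_rfl
  linarith

lemma aux_cdf_continuous (μ : Measure ℝ) [IsProbabilityMeasure μ]
    (hatom : ∀ x : ℝ, μ {x} = 0) : Continuous (cdf μ) := by
  rw [continuous_iff_continuousAt]
  intro x
  rw [(cdf μ).mono.continuousAt_iff_leftLim_eq_rightLim]
  rw [aux_leftLim_cdf μ hatom, (cdf μ).rightLim_eq]

lemma aux_measure_Icc (μ : Measure ℝ) [IsProbabilityMeasure μ] (hatom : ∀ x : ℝ, μ {x} = 0)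
    (u v : ℝ) : μ (Icc u v) = ENNReal.ofReal (cdf μ v - cdf μ u) := by
  conv_lhs => rw [← measure_cdf μ]
  rw [(cdf μ).measure_Icc, aux_leftLim_cdf μ hatom]

/-- Key band lemma. -/
lemma aux_band (μ : Measure ℝ) [IsProbabilityMeasure μ]
    (hsupp : μ (Set.Icc (0 : ℝ) 1)ᶜ = 0) (hatom : ∀ x : ℝ, μ {x} = 0)
    (a b : ℝ) (ha : 0 ≤ a) (hab : a ≤ b) (hb : b ≤ 1) :
    μ (Icc (0:ℝ) 1 ∩ cdf μ ⁻¹' Icc a b) ≤ ENNReal.ofReal (b - a) := by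
  have hcont := aux_cdf_continuous μ hatom
  have hmono : Monotone (cdf μ) := (cdf μ).mono
  -- endpoints
  have hF1 : cdf μ 1 = 1 := by
    rw [cdf_eq_real, measureReal_def]
    have : μ (Iic (1:ℝ)) = 1 := by
      rw [← Set.compl_Ioi, measure_compl measurableSet_Ioi (measure_ne_top μ _)]
      have : μ (Ioi (1:ℝ)) = 0 :=
        measure_mono_null (fun y hy => by simp only [mem_compl_iff, mem_Icc, not_and, not_le]
                                          intro _; exact hy) hsupp
      rw [this, measure_univ, tsub_zero]
    rw [this]; simp
  have hFm1 : cdf μ (-1) = 0 := by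
    rw [cdf_eq_real, measureReal_def]
    have : μ (Iic (-1:ℝ)) = 0 :=
      measure_mono_null (fun y hy => by
        simp only [mem_Iic] at hy
        simp only [mem_compl_iff, mem_Icc, not_and, not_le]
        intro h0; linarith) hsupp
    rw [this]; simp
  -- IVT
  obtain ⟨v, hv_mem, hv⟩ : ∃ v ∈ Icc (-1:ℝ) 1, cdf μ v = b := by
    have := intermediate_value_Icc (by norm_num : (-1:ℝ) ≤ 1) hcont.continuousOn
    have hbmem : b ∈ Icc (cdf μ (-1)) (cdf μ 1) := by
      rw [hF1, hFm1]; exact ⟨le_trans ha hab, hb⟩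
    exact this hbmem
  obtain ⟨u, hu_mem, hu⟩ : ∃ u ∈ Icc (-1:ℝ) v, cdf μ u = a := by
    have := intermediate_value_Icc hv_mem.1 hcont.continuousOn
    have hamem : a ∈ Icc (cdf μ (-1)) (cdf μ v) := by
      rw [hFm1, hv]; exact ⟨ha, hab⟩
    exact this hamem
  -- tail sets
  set Tb : Set ℝ := Icc v 1 ∩ cdf μ ⁻¹' {b} with hTb_def
  set Ta : Set ℝ := Icc (-1) u ∩ cdf μ ⁻¹' {a} with hTa_def
  have hTb_closed : IsClosed Tb := (isClosed_Icc).inter (isClosed_singleton.preimage hcont)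
  have hTa_closed : IsClosed Ta := (isClosed_Icc).inter (isClosed_singleton.preimage hcont)
  have hTb_ne : Tb.Nonempty := ⟨v, ⟨le_rfl, hv_mem.2⟩, hv⟩
  have hTa_ne : Ta.Nonempty := ⟨u, ⟨hu_mem.1, le_rfl⟩, hu⟩
  have hTb_bdd : BddAbove Tb := ⟨1, fun y hy => hy.1.2⟩
  have hTa_bdd : BddBelow Ta := ⟨-1, fun y hy => hy.1.1⟩
  set w := sSup Tb with hw_def
  set z := sInf Ta with hz_def
  have hw_mem : w ∈ Tb := hTb_closed.csSup_mem hTb_ne hTb_bdd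
  have hz_mem : z ∈ Ta := hTa_closed.csInf_mem hTa_ne hTa_bdd
  have hTb_meas : μ Tb = 0 := by
    have hsub : Tb ⊆ Icc v w := fun y hy => ⟨hy.1.1, le_csSup hTb_bdd hy⟩
    refine le_antisymm ?_ (_root_.zero_le)
    calc μ Tb ≤ μ (Icc v w) := measure_mono hsub
    _ = ENNReal.ofReal (cdf μ w - cdf μ v) := aux_measure_Icc μ hatom v w
    _ = 0 := by rw [hw_mem.2, hv]; simp
  have hTa_meas : μ Ta = 0 := by
    have hsub : Ta ⊆ Icc z u := fun y hy => ⟨csInf_le hTa_bdd hy, hy.1.2⟩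
    refine le_antisymm ?_ (_root_.zero_le)
    calc μ Ta ≤ μ (Icc z u) := measure_mono hsub
    _ = ENNReal.ofReal (cdf μ u - cdf μ z) := aux_measure_Icc μ hatom z u
    _ = 0 := by rw [hz_mem.2, hu]; simp
  have hcover : Icc (0:ℝ) 1 ∩ cdf μ ⁻¹' Icc a b ⊆ Icc u v ∪ Ta ∪ Tb := by
    rintro q ⟨⟨hq0, hq1⟩, hqa, hqb⟩
    rcases lt_or_ge q u with hqu | hqu
    · left; right
      refine ⟨⟨by linarith [hu_mem.1], hqu.le⟩, ?_⟩
      have : cdf μ q ≤ a := by rw [← hu]; exact hmono hqu.le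
      exact le_antisymm this hqa
    rcases le_or_gt q v with hqv | hqv
    · left; left; exact ⟨hqu, hqv⟩
    · right
      refine ⟨⟨hqv.le, hq1⟩, ?_⟩
      have : b ≤ cdf μ q := by rw [← hv]; exact hmono hqv.le
      exact le_antisymm hqb this
  calc μ (Icc (0:ℝ) 1 ∩ cdf μ ⁻¹' Icc a b) ≤ μ (Icc u v ∪ Ta ∪ Tb) := measure_mono hcover
  _ ≤ μ (Icc u v ∪ Ta) + μ Tb := measure_union_le _ _
  _ ≤ μ (Icc u v) + μ Ta + μ Tb := by gcongr; exact measure_union_le _ _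
  _ = μ (Icc u v) := by rw [hTa_meas, hTb_meas]; simp
  _ = ENNReal.ofReal (cdf μ v - cdf μ u) := aux_measure_Icc μ hatom u v
  _ = ENNReal.ofReal (b - a) := by rw [hu, hv]


end AuxLemmas

section Main

open Set ProbabilityTheory Filter Nat
open scoped ENNReal NNReal

/-- upper bound on the required model size for average-case (μ-norm)
error in learned indexing, for an arbitrary nonatomic Borel probability measure `μ`
on `[0,1]`. -/
theorem stmt_11 (μ : Measure ℝ) [IsProbabilityMeasure μ]
    (hsupp : μ (Set.Icc (0 : ℝ) 1)ᶜ = 0) (hatom : ∀ x : ℝ, μ {x} = 0)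
    (n : ℕ) (hn : 0 < n) (ε : ℝ) (hε1 : 0 < ε) (hε2 : ε ≤ (n : ℝ)) :
    ∃ σ : ℕ, (σ : ℤ) ≤
      ⌈(n : ℝ) * Real.logb 2 (Real.exp 1 + Real.exp 1 / ε + Real.exp 1 / (n : ℝ))⌉ ∧
    ∃ (ρ : (Fin n → ℝ) → (Fin σ → Bool)) (fhat : (Fin σ → Bool) → (ℝ → ℝ)),
      ∀ D : Fin n → ℝ, (∀ i, D i ∈ Set.Icc (0 : ℝ) 1) →
        ∫⁻ q in Set.Icc (0 : ℝ) 1, ENNReal.ofReal |fhat (ρ D) q - rank D q| ∂μ ≤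
          ENNReal.ofReal ε := by
  classical
  have hnR : (0:ℝ) < n := by exact_mod_cast hn
  set k : ℕ := ⌈(n:ℝ)/ε⌉₊ with hk_def
  have hk1 : 1 ≤ k := Nat.one_le_iff_ne_zero.2 (by
    have : (0:ℝ) < (n:ℝ)/ε := by positivity
    simpa [hk_def] using (Nat.ceil_pos.2 this).ne')
  have hkR : (0:ℝ) < (k:ℝ) := by exact_mod_cast hk1
  -- the quantization code
  set F : ℝ → ℝ := fun x => cdf μ x with hF_def
  have hF0 : ∀ x, 0 ≤ F x := fun x => cdf_nonneg μ x
  have hF1' : ∀ x, F x ≤ 1 := fun x => cdf_le_one μ x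
  have hFmono : Monotone F := (cdf μ).mono
  set code : ℝ → Fin k := fun x =>
    ⟨min (k-1) ⌊(k:ℝ) * F x⌋₊, lt_of_le_of_lt (Nat.min_le_left _ _) (by omega)⟩ with hcode_def
  have hcode_low : ∀ x, ((code x : ℕ):ℝ)/k ≤ F x := by
    intro x
    rw [div_le_iff₀ hkR]
    have h1 : ((code x : ℕ):ℝ) ≤ (⌊(k:ℝ) * F x⌋₊ : ℝ) := by
      exact_mod_cast Nat.min_le_right (k-1) _
    have h2 : (⌊(k:ℝ) * F x⌋₊ : ℝ) ≤ (k:ℝ) * F x := Nat.floor_le (mul_nonneg hkR.le (hF0 x))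
    linarith [mul_comm (F x) (k:ℝ)]
  have hcode_high : ∀ x, F x ≤ (((code x : ℕ):ℝ)+1)/k := by
    intro x
    rw [le_div_iff₀ hkR]
    rcases le_or_gt ⌊(k:ℝ) * F x⌋₊ (k-1) with h | h
    · have hc : (code x : ℕ) = ⌊(k:ℝ) * F x⌋₊ := by
        simp [hcode_def, Nat.min_eq_right h]
      have := Nat.lt_floor_add_one ((k:ℝ) * F x)
      rw [hc]
      push_cast
      linarith [mul_comm (F x) (k:ℝ)]
    · have hc : (code x : ℕ) = k - 1 := by simp [hcode_def, Nat.min_eq_left h.le]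
      have : (((code x : ℕ):ℝ)+1) = k := by
        rw [hc]; push_cast [Nat.cast_sub hk1]; ring
      rw [this]
      have := hF1' x
      nlinarith
  have hcode_le : ∀ x, ((code x : ℕ):ℝ) + 1 ≤ k := by
    intro x
    have h : (code x : ℕ) ≤ k - 1 := Nat.min_le_left _ _
    have : (code x : ℕ) + 1 ≤ k := by omega
    exact_mod_cast this
  -- per-point agreement outside the band
  have hpt : ∀ (x q : ℝ), F q ∉ Icc (((code x : ℕ):ℝ)/k) ((((code x : ℕ):ℝ)+1)/k) →
      (if (((code x : ℕ):ℝ)+1)/k ≤ F q then (1:ℝ) else 0) = (if x ≤ q then 1 else 0) := by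
    intro x q hq
    by_cases hxq : x ≤ q
    · rw [if_pos hxq]
      rw [if_pos]
      by_contra h
      push_neg at h
      exact hq ⟨le_trans (hcode_low x) (hFmono hxq), by linarith⟩
    · rw [if_neg hxq]
      rw [if_neg]
      intro h
      have h1 : F q ≤ F x := hFmono (le_of_not_ge hxq)
      have h2 : F x ≤ (((code x : ℕ):ℝ)+1)/k := hcode_high x
      have h3 : F q = (((code x : ℕ):ℝ)+1)/k := le_antisymm (h1.trans h2) h
      refine hq ⟨?_, le_of_eq h3⟩
      rw [h3]; gcongr; linarith
  -- model size
  set B : ℝ := Real.exp 1 + Real.exp 1 / ε + Real.exp 1 / (n : ℝ) with hB_def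
  have he1 : (1:ℝ) < Real.exp 1 := by
    have := Real.add_one_le_exp (1:ℝ); linarith
  have hB1 : (1:ℝ) < B := by
    have h1 : 0 < Real.exp 1 / ε := by positivity
    have h2 : 0 < Real.exp 1 / (n:ℝ) := by positivity
    simp only [hB_def]; linarith
  have hB0 : (0:ℝ) < B := lt_trans one_pos hB1
  set M : ℕ := Fintype.card (Sym (Fin k) n) with hM_def
  have hMchoose : M = (k + n - 1).choose n := by
    rw [hM_def, Sym.card_sym_eq_choose, Fintype.card_fin]
  set t : ℕ := (⌈(n:ℝ) * Real.logb 2 B⌉).toNat with ht_def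
  have hceil0 : (0:ℤ) ≤ ⌈(n:ℝ) * Real.logb 2 B⌉ :=
    Int.ceil_nonneg (mul_nonneg hnR.le (Real.logb_nonneg one_lt_two hB1.le))
  -- the real bound  M ≤ B ^ n ≤ 2 ^ t
  have hMreal : (M : ℝ) ≤ ((2:ℕ) ^ t : ℕ) := by
    set m : ℕ := k + n - 1 with hm_def
    have hmcast : (m:ℝ) = (k:ℝ) + (n:ℝ) - 1 := by
      rw [hm_def]; push_cast [Nat.cast_sub (by omega : 1 ≤ k + n)]; ring
    have h1 : (M:ℝ) ≤ ((m:ℝ)^n) / (n ! : ℝ) := by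
      rw [hMchoose]
      exact_mod_cast Nat.choose_le_pow_div n m
    have hfact_pos : (0:ℝ) < (n ! : ℝ) := by exact_mod_cast Nat.factorial_pos n
    have h2 : ((m:ℝ)^n) / (n ! : ℝ) ≤ (Real.exp 1 * m / n)^n := by
      have h5 := aux_pow_le_factorial_mul_exp n
      have hm0 : (0:ℝ) ≤ (m:ℝ) := Nat.cast_nonneg m
      rw [div_le_iff₀ hfact_pos, div_pow, mul_pow, div_mul_eq_mul_div,
        le_div_iff₀ (by positivity : (0:ℝ) < (n:ℝ)^n)]
      calc (m:ℝ)^n * (n:ℝ)^n ≤ (m:ℝ)^n * ((n ! :ℝ) * Real.exp 1 ^ n) := by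
            apply mul_le_mul_of_nonneg_left h5 (by positivity)
      _ = Real.exp 1 ^ n * (m:ℝ)^n * (n ! : ℝ) := by ring
    have h3 : Real.exp 1 * m / n ≤ B := by
      have hkup : (k:ℝ) < (n:ℝ)/ε + 1 := Nat.ceil_lt_add_one (by positivity)
      have he0 : (0:ℝ) < Real.exp 1 := Real.exp_pos 1
      rw [hmcast, div_le_iff₀ hnR, hB_def]
      have hklt : ε * ((k:ℝ) - 1) ≤ (n:ℝ) := by
        have h8 : (k:ℝ) - 1 < (n:ℝ)/ε := by linarith
        have h9 : ε * ((k:ℝ)-1) < ε * ((n:ℝ)/ε) := mul_lt_mul_of_pos_left h8 hε1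
        have h10 : ε * ((n:ℝ)/ε) = (n:ℝ) := by field_simp
        linarith
      have hd1 : Real.exp 1 / ε * (n:ℝ) = Real.exp 1 * ((n:ℝ)/ε) := by field_simp
      have hd2 : Real.exp 1 / (n:ℝ) * (n:ℝ) = Real.exp 1 := by field_simp
      have : Real.exp 1 * ((k:ℝ) - 1) ≤ Real.exp 1 * ((n:ℝ)/ε) := by
        apply mul_le_mul_of_nonneg_left _ he0.le
        linarith
      nlinarith
    have h4 : (Real.exp 1 * m / n)^n ≤ B ^ n :=
      pow_le_pow_left₀ (by positivity) h3 n
    have h6 : B ^ n ≤ ((2:ℕ) ^ t : ℕ) := by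
      have e1 : B ^ n = (2:ℝ) ^ ((Real.logb 2 B) * (n:ℝ)) := by
        rw [Real.rpow_mul (by norm_num : (0:ℝ) ≤ 2), Real.rpow_logb two_pos (by norm_num) hB0,
          Real.rpow_natCast]
      have e2 : Real.logb 2 B * (n:ℝ) ≤ (t:ℝ) := by
        have := Int.le_ceil ((n:ℝ) * Real.logb 2 B)
        have h7 : ((⌈(n:ℝ) * Real.logb 2 B⌉ : ℤ):ℝ) ≤ (t:ℝ) := by
          rw [ht_def]
          exact_mod_cast Int.self_le_toNat _
        linarith [mul_comm (Real.logb 2 B) (n:ℝ)]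
      rw [e1]
      calc (2:ℝ) ^ (Real.logb 2 B * (n:ℝ)) ≤ (2:ℝ) ^ ((t:ℕ):ℝ) :=
            Real.rpow_le_rpow_of_exponent_le one_le_two e2
      _ = ((2:ℕ) ^ t : ℕ) := by rw [Real.rpow_natCast]; push_cast; ring
    linarith
  have hMle : M ≤ 2 ^ t := by exact_mod_cast hMreal
  have hσt : Nat.clog 2 M ≤ t := (Nat.clog_le_iff_le_pow one_lt_two).2 hMle
  refine ⟨Nat.clog 2 M, ?_, ?_⟩
  · calc ((Nat.clog 2 M : ℕ) : ℤ) ≤ (t : ℤ) := by exact_mod_cast hσt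
    _ = ⌈(n:ℝ) * Real.logb 2 B⌉ := by rw [ht_def]; exact Int.toNat_of_nonneg hceil0
  -- construction
  have hcard : Fintype.card (Sym (Fin k) n) ≤ Fintype.card (Fin (Nat.clog 2 M) → Bool) := by
    rw [Fintype.card_fun, Fintype.card_fin, Fintype.card_bool]
    exact Nat.le_pow_clog one_lt_two M
  haveI : Nonempty (Sym (Fin k) n) :=
    ⟨⟨Multiset.replicate n ⟨0, by omega⟩, Multiset.card_replicate _ _⟩⟩
  obtain ⟨e⟩ := Function.Embedding.nonempty_of_card_le hcard
  set symOf : (Fin n → ℝ) → Sym (Fin k) n := fun D =>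
    ⟨Multiset.map (fun i => code (D i)) Finset.univ.val, by simp⟩ with hsymOf_def
  refine ⟨fun D => e (symOf D),
    fun bv q => ((Function.invFun e bv : Sym (Fin k) n).1.map
      (fun (c : Fin k) => if (((c : ℕ):ℝ)+1)/k ≤ F q then (1:ℝ) else 0)).sum, ?_⟩
  intro D hD
  have hdec : Function.invFun e (e (symOf D)) = symOf D :=
    Function.leftInverse_invFun e.injective (symOf D)
  have hfhat : ∀ q : ℝ, ((Function.invFun e (e (symOf D)) : Sym (Fin k) n).1.map
      (fun (c : Fin k) => if (((c : ℕ):ℝ)+1)/k ≤ F q then (1:ℝ) else 0)).sum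
      = ∑ i, (if (((code (D i) : ℕ):ℝ)+1)/k ≤ F q then (1:ℝ) else 0) := by
    intro q
    rw [hdec, hsymOf_def]
    simp only [Multiset.map_map, Function.comp]
    rw [Finset.sum_eq_multiset_sum]
  -- error sets
  set E : Fin n → Set ℝ := fun i =>
    F ⁻¹' Icc (((code (D i) : ℕ):ℝ)/k) ((((code (D i) : ℕ):ℝ)+1)/k) with hE_def
  have hcont : Continuous F := aux_cdf_continuous μ hatom
  have hEmeas : ∀ i, MeasurableSet (E i) :=
    fun i => (measurableSet_Icc).preimage hcont.measurable
  -- pointwise bound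
  have hptw : ∀ q : ℝ,
      ENNReal.ofReal |(((Function.invFun e (e (symOf D)) : Sym (Fin k) n).1.map
        (fun (c : Fin k) => if (((c : ℕ):ℝ)+1)/k ≤ F q then (1:ℝ) else 0)).sum) - rank D q|
      ≤ ∑ i, (E i).indicator (fun _ => (1:ℝ≥0∞)) q := by
    intro q
    rw [hfhat q]
    unfold rank
    rw [← Finset.sum_sub_distrib]
    calc ENNReal.ofReal |∑ i, ((if (((code (D i) : ℕ):ℝ)+1)/k ≤ F q then (1:ℝ) else 0)
            - (if D i ≤ q then 1 else 0))|
        ≤ ENNReal.ofReal (∑ i, |(if (((code (D i) : ℕ):ℝ)+1)/k ≤ F q then (1:ℝ) else 0)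
            - (if D i ≤ q then 1 else 0)|) := by
          apply ENNReal.ofReal_le_ofReal
          exact Finset.abs_sum_le_sum_abs _ _
    _ = ∑ i, ENNReal.ofReal |(if (((code (D i) : ℕ):ℝ)+1)/k ≤ F q then (1:ℝ) else 0)
            - (if D i ≤ q then 1 else 0)| := by
          rw [ENNReal.ofReal_sum_of_nonneg (fun i _ => abs_nonneg _)]
    _ ≤ ∑ i, (E i).indicator (fun _ => (1:ℝ≥0∞)) q := by
          apply Finset.sum_le_sum
          intro i _
          by_cases hq : q ∈ E i
          · rw [Set.indicator_of_mem hq]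
            apply ENNReal.ofReal_le_one.2
            have h1 : |(if (((code (D i) : ℕ):ℝ)+1)/k ≤ F q then (1:ℝ) else 0)
                - (if D i ≤ q then 1 else 0)| ≤ 1 := by
              split_ifs <;> norm_num
            exact h1
          · rw [Set.indicator_of_notMem hq]
            have := hpt (D i) q hq
            rw [this]
            simp
  -- integrate
  apply le_trans (lintegral_mono fun q => hptw q)
  calc ∫⁻ q in Set.Icc (0 : ℝ) 1, ∑ i, (E i).indicator (fun _ => (1:ℝ≥0∞)) q ∂μ
      = ∑ i, ∫⁻ q in Set.Icc (0 : ℝ) 1, (E i).indicator (fun _ => (1:ℝ≥0∞)) q ∂μ := by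
        apply lintegral_finset_sum
        intro i _
        exact measurable_const.indicator (hEmeas i)
  _ ≤ ∑ _i : Fin n, ENNReal.ofReal (1/(k:ℝ)) := by
        apply Finset.sum_le_sum
        intro i _
        rw [lintegral_indicator (hEmeas i), setLIntegral_one, Measure.restrict_apply (hEmeas i)]
        have hb_i : ((((code (D i)) : ℕ):ℝ)+1)/k ≤ 1 := by
          rw [div_le_one hkR]; exact hcode_le (D i)
        have hband := aux_band μ hsupp hatom (((code (D i) : ℕ):ℝ)/k)
          ((((code (D i) : ℕ):ℝ)+1)/k)
          (by positivity) (by gcongr <;> linarith) hb_i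
        have heq : (((code (D i) : ℕ):ℝ)+1)/k - ((code (D i) : ℕ):ℝ)/k = 1/(k:ℝ) := by
          field_simp; ring
        rw [Set.inter_comm]
        rw [heq] at hband
        exact hband
  _ = (n : ℝ≥0∞) * ENNReal.ofReal (1/(k:ℝ)) := by
        rw [Finset.sum_const, Finset.card_univ, Fintype.card_fin, nsmul_eq_mul]
  _ ≤ ENNReal.ofReal ε := by
        rw [← ENNReal.ofReal_natCast n, ← ENNReal.ofReal_mul (Nat.cast_nonneg n)]
        apply ENNReal.ofReal_le_ofReal
        have hkc : (n:ℝ)/ε ≤ (k:ℝ) := Nat.le_ceil _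
        rw [mul_one_div, div_le_iff₀ hkR]
        calc (n:ℝ) ≤ ε * ((n:ℝ)/ε) := by field_simp; exact le_rfl
        _ ≤ ε * (k:ℝ) := by apply mul_le_mul_of_nonneg_left hkc hε1.le


end Main
end

section
/- Let n be a positive integer and ε > 0 a real number. There exists a measurable probability density g on the query domain Q_c (with d = 1), i.e., g ≥ 0 and ∫_{Q_c} g = 1, such that for all datasets D, D' ∈ [0,1]^n, ∫_{Q_c} |c_D(q) − c_{D'}(q)|·g(q) dq ≤ ε. -/
open MeasureTheory

/-- The query domain `Q_c` for 1-dimensional range queries: pairs `(c, r)` with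
`r ∈ [0,1]` and `c ∈ [−r, 1−r]`. -/
def Qc1 : Set (ℝ × ℝ) :=
  {q | q.2 ∈ Set.Icc (0 : ℝ) 1 ∧ q.1 ∈ Set.Icc (-q.2) (1 - q.2)}

/-- The cardinality function of a 1-dimensional dataset:
`c_D(c, r) = Σ_i 1[c ≤ D_i ≤ c + r]`. -/
noncomputable def cardF1 {n : ℕ} (D : Fin n → ℝ) (q : ℝ × ℝ) : ℝ :=
  ∑ i, if q.1 ≤ D i ∧ D i ≤ q.1 + q.2 then 1 else 0


noncomputable def gAux (δ : ℝ) : ℝ × ℝ → ℝ :=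
  fun q => if q.2 ∈ Set.Icc (0:ℝ) δ ∧ q.1 ∈ Set.Icc (-q.2) (1 - q.2) then 1/δ else 0

lemma gAux_set_meas (δ : ℝ) :
    MeasurableSet {q : ℝ × ℝ | q.2 ∈ Set.Icc (0:ℝ) δ ∧ q.1 ∈ Set.Icc (-q.2) (1 - q.2)} := by
  have h1 : {q : ℝ × ℝ | q.2 ∈ Set.Icc (0:ℝ) δ ∧ q.1 ∈ Set.Icc (-q.2) (1 - q.2)}
      = ({q : ℝ×ℝ | 0 ≤ q.2} ∩ {q | q.2 ≤ δ}) ∩ ({q | -q.2 ≤ q.1} ∩ {q | q.1 ≤ 1 - q.2}) := by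
    ext q; simp [Set.mem_Icc]
  rw [h1]
  exact ((measurableSet_le measurable_const measurable_snd).inter
      (measurableSet_le measurable_snd measurable_const)).inter
    ((measurableSet_le measurable_snd.neg measurable_fst).inter
      (measurableSet_le measurable_fst (measurable_const.sub measurable_snd)))

lemma measurable_gAux (δ : ℝ) : Measurable (gAux δ) := by
  unfold gAux
  exact Measurable.ite (gAux_set_meas δ) measurable_const measurable_const

lemma measurable_Qc1set : MeasurableSet {q : ℝ × ℝ | q.2 ∈ Set.Icc (0:ℝ) 1 ∧ q.1 ∈ Set.Icc (-q.2) (1 - q.2)} :=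
  gAux_set_meas 1

lemma lintegral_gAux {δ : ℝ} (hδ : 0 < δ) :
    ∫⁻ q : ℝ × ℝ, ENNReal.ofReal (gAux δ q) = 1 := by
  rw [Measure.volume_eq_prod, lintegral_prod_symm _ ((measurable_gAux δ).ennreal_ofReal.aemeasurable)]
  have key : ∀ r : ℝ, ∫⁻ c : ℝ, ENNReal.ofReal (gAux δ (c, r))
      = (Set.Icc (0:ℝ) δ).indicator (fun _ => ENNReal.ofReal (1/δ)) r := by
    intro r
    by_cases hr : r ∈ Set.Icc (0:ℝ) δ
    · rw [Set.indicator_of_mem hr]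
      have : ∀ c : ℝ, ENNReal.ofReal (gAux δ (c, r))
          = (Set.Icc (-r) (1-r)).indicator (fun _ => ENNReal.ofReal (1/δ)) c := by
        intro c
        by_cases hc : c ∈ Set.Icc (-r) (1-r)
        · rw [Set.indicator_of_mem hc]
          simp only [gAux]
          rw [if_pos ⟨hr, hc⟩]
        · rw [Set.indicator_of_notMem hc]
          simp only [gAux]
          rw [if_neg (by tauto)]
          simp
      simp_rw [this]
      rw [lintegral_indicator measurableSet_Icc, setLIntegral_const, Real.volume_Icc]
      have : (1:ℝ) - r - -r = 1 := by ring
      rw [this]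
      simp
    · rw [Set.indicator_of_notMem hr]
      have : ∀ c : ℝ, ENNReal.ofReal (gAux δ (c, r)) = 0 := by
        intro c
        simp only [gAux]
        rw [if_neg (by tauto)]
        simp
      simp_rw [this]
      simp
  simp_rw [key]
  rw [lintegral_indicator measurableSet_Icc, setLIntegral_const, Real.volume_Icc]
  rw [← ENNReal.ofReal_mul (by positivity), sub_zero, one_div_mul_cancel hδ.ne']
  simp

lemma pointBound {δ : ℝ} (hδ : 0 < δ) (x : ℝ) :
    ∫⁻ q : ℝ × ℝ, ENNReal.ofReal ((if q.1 ≤ x ∧ x ≤ q.1 + q.2 then (1:ℝ) else 0) * gAux δ q)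
      ≤ ENNReal.ofReal δ := by
  have hpt : ∀ q : ℝ × ℝ, ENNReal.ofReal ((if q.1 ≤ x ∧ x ≤ q.1 + q.2 then (1:ℝ) else 0) * gAux δ q)
      ≤ (Set.Icc (x-δ) x ×ˢ Set.Icc (0:ℝ) δ).indicator (fun _ => ENNReal.ofReal (1/δ)) q := by
    intro q
    by_cases hB : q ∈ Set.Icc (x-δ) x ×ˢ Set.Icc (0:ℝ) δ
    · rw [Set.indicator_of_mem hB]
      apply ENNReal.ofReal_le_ofReal
      have hg : gAux δ q ≤ 1/δ := by
        simp only [gAux]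
        split
        · exact le_refl _
        · positivity
      by_cases hχ : q.1 ≤ x ∧ x ≤ q.1 + q.2
      · rw [if_pos hχ, one_mul]; exact hg
      · rw [if_neg hχ, zero_mul]; positivity
    · rw [Set.indicator_of_notMem hB]
      have : (if q.1 ≤ x ∧ x ≤ q.1 + q.2 then (1:ℝ) else 0) * gAux δ q = 0 := by
        by_cases hχ : q.1 ≤ x ∧ x ≤ q.1 + q.2
        · rw [if_pos hχ, one_mul]
          simp only [gAux]
          rw [if_neg]
          intro ⟨hr, hc⟩
          apply hB
          refine ⟨⟨?_, hχ.1⟩, hr⟩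
          have := hχ.2
          have := hr.2
          linarith
        · rw [if_neg hχ, zero_mul]
      rw [this]; simp
  calc ∫⁻ q : ℝ × ℝ, ENNReal.ofReal ((if q.1 ≤ x ∧ x ≤ q.1 + q.2 then (1:ℝ) else 0) * gAux δ q)
      ≤ ∫⁻ q : ℝ × ℝ, (Set.Icc (x-δ) x ×ˢ Set.Icc (0:ℝ) δ).indicator
          (fun _ => ENNReal.ofReal (1/δ)) q := lintegral_mono hpt
    _ = ENNReal.ofReal (1/δ) * volume (Set.Icc (x-δ) x ×ˢ Set.Icc (0:ℝ) δ) := by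
        rw [lintegral_indicator (measurableSet_Icc.prod measurableSet_Icc), setLIntegral_const]
    _ ≤ ENNReal.ofReal δ := by
        rw [Measure.volume_eq_prod, Measure.prod_prod, Real.volume_Icc, Real.volume_Icc]
        have h1 : x - (x - δ) = δ := by ring
        rw [h1, sub_zero, ← mul_assoc, ← ENNReal.ofReal_mul (by positivity),
          one_div_mul_cancel hδ.ne']
        simp

/-- there is a query distribution under which all datasets have
arbitrarily close cardinality functions. -/
theorem stmt_12 (n : ℕ) (hn : 0 < n) (ε : ℝ) (hε : 0 < ε) :
    ∃ g : ℝ × ℝ → ℝ, Measurable g ∧ (∀ q, 0 ≤ g q) ∧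
      (∫⁻ q in Qc1, ENNReal.ofReal (g q) = 1) ∧
      ∀ D D' : Fin n → ℝ, (∀ i, D i ∈ Set.Icc (0 : ℝ) 1) →
        (∀ i, D' i ∈ Set.Icc (0 : ℝ) 1) →
        ∫⁻ q in Qc1, ENNReal.ofReal (|cardF1 D q - cardF1 D' q| * g q) ≤
          ENNReal.ofReal ε := by
  have hn' : (0:ℝ) < n := by exact_mod_cast hn
  set δ : ℝ := min 1 (ε / (2 * n)) with hδdef
  have hδpos : 0 < δ := lt_min one_pos (by positivity)
  have hδ1 : δ ≤ 1 := min_le_left _ _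
  have hδε : (n:ℝ) * (δ + δ) ≤ ε := by
    have h := min_le_right 1 (ε / (2 * n))
    rw [le_div_iff₀ (by positivity)] at h
    nlinarith [h]
  have hQc1 : MeasurableSet Qc1 := measurable_Qc1set
  have hg0 : ∀ q, 0 ≤ gAux δ q := by
    intro q
    simp only [gAux]
    split
    · positivity
    · exact le_refl _
  have hgsupp : ∀ q, q ∉ Qc1 → gAux δ q = 0 := by
    intro q hq
    simp only [gAux]
    rw [if_neg]
    intro ⟨hr, hc⟩
    exact hq ⟨⟨hr.1, hr.2.trans hδ1⟩, hc⟩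
  refine ⟨gAux δ, measurable_gAux δ, hg0, ?_, ?_⟩
  · rw [← lintegral_indicator hQc1]
    have : Qc1.indicator (fun q => ENNReal.ofReal (gAux δ q)) = fun q => ENNReal.ofReal (gAux δ q) := by
      funext q
      by_cases hq : q ∈ Qc1
      · rw [Set.indicator_of_mem hq]
      · rw [Set.indicator_of_notMem hq, hgsupp q hq]
        simp
    rw [this, lintegral_gAux hδpos]
  · intro D D' hD hD'
    set χ : ℝ → ℝ × ℝ → ℝ := fun x q => if q.1 ≤ x ∧ x ≤ q.1 + q.2 then 1 else 0 with hχdef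
    have hχmeas : ∀ x, Measurable fun q : ℝ × ℝ => ENNReal.ofReal (χ x q * gAux δ q) := by
      intro x
      apply Measurable.ennreal_ofReal
      apply Measurable.mul _ (measurable_gAux δ)
      apply Measurable.ite _ measurable_const measurable_const
      have : {q : ℝ × ℝ | q.1 ≤ x ∧ x ≤ q.1 + q.2}
          = {q : ℝ × ℝ | q.1 ≤ x} ∩ {q | x ≤ q.1 + q.2} := by ext q; simp
      rw [this]
      exact (measurableSet_le measurable_fst measurable_const).inter
        (measurableSet_le measurable_const (measurable_fst.add measurable_snd))
    have hχ01 : ∀ x q, 0 ≤ χ x q := by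
      intro x q; simp only [χ]; split <;> norm_num
    have hpt : ∀ q, ENNReal.ofReal (|cardF1 D q - cardF1 D' q| * gAux δ q)
        ≤ ∑ i, (ENNReal.ofReal (χ (D i) q * gAux δ q) + ENNReal.ofReal (χ (D' i) q * gAux δ q)) := by
      intro q
      have habs : |cardF1 D q - cardF1 D' q| ≤ ∑ i, (χ (D i) q + χ (D' i) q) := by
        unfold cardF1
        rw [← Finset.sum_sub_distrib]
        refine (Finset.abs_sum_le_sum_abs _ _).trans (Finset.sum_le_sum fun i _ => ?_)
        refine (abs_sub _ _).trans ?_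
        simp only [χ]
        gcongr <;> (split <;> simp)
      calc ENNReal.ofReal (|cardF1 D q - cardF1 D' q| * gAux δ q)
          ≤ ENNReal.ofReal ((∑ i, (χ (D i) q + χ (D' i) q)) * gAux δ q) := by
            apply ENNReal.ofReal_le_ofReal
            exact mul_le_mul_of_nonneg_right habs (hg0 q)
        _ = ENNReal.ofReal (∑ i, (χ (D i) q * gAux δ q + χ (D' i) q * gAux δ q)) := by
            rw [Finset.sum_mul]
            congr 1
            exact Finset.sum_congr rfl fun i _ => by ring
        _ = ∑ i, ENNReal.ofReal (χ (D i) q * gAux δ q + χ (D' i) q * gAux δ q) := by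
            rw [ENNReal.ofReal_sum_of_nonneg]
            intro i _
            have := hχ01 (D i) q; have := hχ01 (D' i) q; have := hg0 q
            positivity
        _ = ∑ i, (ENNReal.ofReal (χ (D i) q * gAux δ q) + ENNReal.ofReal (χ (D' i) q * gAux δ q)) := by
            refine Finset.sum_congr rfl fun i _ => ?_
            rw [ENNReal.ofReal_add]
            · have := hχ01 (D i) q; have := hg0 q; positivity
            · have := hχ01 (D' i) q; have := hg0 q; positivity
    calc ∫⁻ q in Qc1, ENNReal.ofReal (|cardF1 D q - cardF1 D' q| * gAux δ q)
        ≤ ∫⁻ q, ENNReal.ofReal (|cardF1 D q - cardF1 D' q| * gAux δ q) :=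
          setLIntegral_le_lintegral _ _
      _ ≤ ∫⁻ q, ∑ i, (ENNReal.ofReal (χ (D i) q * gAux δ q) + ENNReal.ofReal (χ (D' i) q * gAux δ q)) :=
          lintegral_mono hpt
      _ = ∑ i, ∫⁻ q, (ENNReal.ofReal (χ (D i) q * gAux δ q) + ENNReal.ofReal (χ (D' i) q * gAux δ q)) := by
          apply lintegral_finset_sum
          intro i _
          exact (hχmeas (D i)).add (hχmeas (D' i))
      _ ≤ ∑ _i : Fin n, (ENNReal.ofReal δ + ENNReal.ofReal δ) := by
          refine Finset.sum_le_sum fun i _ => ?_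
          rw [lintegral_add_left (hχmeas (D i))]
          exact add_le_add (pointBound hδpos (D i)) (pointBound hδpos (D' i))
      _ ≤ ENNReal.ofReal ε := by
          rw [Finset.sum_const, Finset.card_univ, Fintype.card_fin, nsmul_eq_mul,
            ← ENNReal.ofReal_add hδpos.le hδpos.le, ← ENNReal.ofReal_natCast n,
            ← ENNReal.ofReal_mul (by positivity)]
          exact ENNReal.ofReal_le_ofReal hδε
end

section
/- Let D, D' ∈ [0,1]^n be datasets whose entries are in nondecreasing (sorted) order. Then ∫_0^1 |r_D(q) − r_{D'}(q)| dq = Σ_{i=1}^n |D_i − D'_i|. -/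
open MeasureTheory

lemma single_int (a b : ℝ) (ha : 0 ≤ a) (hb : b ≤ 1) (hab : a ≤ b) :
    ∫⁻ q in Set.Icc (0 : ℝ) 1,
      ENNReal.ofReal |(if a ≤ q then (1:ℝ) else 0) - (if b ≤ q then 1 else 0)| =
      ENNReal.ofReal (b - a) := by
  have hfun : ∀ q : ℝ, ENNReal.ofReal |(if a ≤ q then (1:ℝ) else 0) - (if b ≤ q then 1 else 0)|
      = (Set.Ico a b).indicator (fun _ => (1:ENNReal)) q := by
    intro q
    by_cases h1 : a ≤ q <;> by_cases h2 : b ≤ q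
    · simp [Set.indicator, Set.mem_Ico, h1, h2, not_lt.mpr h2]
    · simp [Set.indicator, Set.mem_Ico, h1, h2, lt_of_not_ge h2]
    · exact absurd (hab.trans h2) h1
    · simp [Set.indicator, Set.mem_Ico, h1, h2]
  simp only [hfun]
  rw [lintegral_indicator measurableSet_Ico, setLIntegral_one,
    Measure.restrict_apply measurableSet_Ico]
  have hsub : Set.Ico a b ∩ Set.Icc (0:ℝ) 1 = Set.Ico a b := by
    apply Set.inter_eq_left.mpr
    intro x hx
    exact ⟨ha.trans hx.1, (le_of_lt hx.2).trans hb⟩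
  rw [hsub, Real.volume_Ico]

lemma single_int' (a b : ℝ) (ha : a ∈ Set.Icc (0:ℝ) 1) (hb : b ∈ Set.Icc (0:ℝ) 1) :
    ∫⁻ q in Set.Icc (0 : ℝ) 1,
      ENNReal.ofReal |(if a ≤ q then (1:ℝ) else 0) - (if b ≤ q then 1 else 0)| =
      ENNReal.ofReal |a - b| := by
  rcases le_total a b with h | h
  · rw [abs_sub_comm, abs_of_nonneg (by linarith)]
    exact single_int a b ha.1 hb.2 h
  · rw [abs_of_nonneg (by linarith)]
    have := single_int b a hb.1 ha.2 h
    rw [← this]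
    congr 1
    ext q
    rw [abs_sub_comm]

lemma ptwise {n : ℕ} (D D' : Fin n → ℝ) (hmono : Monotone D) (hmono' : Monotone D') (q : ℝ) :
    |rank D q - rank D' q| =
      ∑ i, |(if D i ≤ q then (1:ℝ) else 0) - (if D' i ≤ q then 1 else 0)| := by
  have hsum : rank D q - rank D' q =
      ∑ i, ((if D i ≤ q then (1:ℝ) else 0) - (if D' i ≤ q then 1 else 0)) := by
    rw [rank, rank, Finset.sum_sub_distrib]
  rw [hsum]
  set a : Fin n → ℝ := fun i => (if D i ≤ q then (1:ℝ) else 0) - (if D' i ≤ q then 1 else 0)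
    with ha
  by_cases hpos : ∀ i, 0 ≤ a i
  · rw [abs_of_nonneg (Finset.sum_nonneg fun i _ => hpos i)]
    exact Finset.sum_congr rfl fun i _ => (abs_of_nonneg (hpos i)).symm
  · push_neg at hpos
    obtain ⟨i, hi⟩ := hpos
    have hi1 : D' i ≤ q ∧ ¬ D i ≤ q := by
      by_cases h1 : D i ≤ q <;> by_cases h2 : D' i ≤ q <;>
        simp [ha, h1, h2] at hi ⊢ <;> linarith
    have hneg : ∀ j, a j ≤ 0 := by
      intro j
      by_contra hj
      push_neg at hj
      have hj1 : D j ≤ q ∧ ¬ D' j ≤ q := by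
        by_cases h1 : D j ≤ q <;> by_cases h2 : D' j ≤ q <;>
          simp [ha, h1, h2] at hj ⊢ <;> linarith
      rcases le_total i j with hij | hij
      · exact hi1.2 ((hmono hij).trans hj1.1)
      · exact hj1.2 ((hmono' hij).trans hi1.1)
    rw [abs_of_nonpos (Finset.sum_nonpos fun j _ => hneg j), ← Finset.sum_neg_distrib]
    exact Finset.sum_congr rfl fun j _ => (abs_of_nonpos (hneg j)).symm

/-- for sorted datasets, the 1-norm distance between rank functions
equals the sum of coordinate-wise distances between the datasets. -/
theorem stmt_15 (n : ℕ) (D D' : Fin n → ℝ)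
    (hD : ∀ i, D i ∈ Set.Icc (0 : ℝ) 1) (hD' : ∀ i, D' i ∈ Set.Icc (0 : ℝ) 1)
    (hmono : Monotone D) (hmono' : Monotone D') :
    ∫⁻ q in Set.Icc (0 : ℝ) 1, ENNReal.ofReal |rank D q - rank D' q| =
      ENNReal.ofReal (∑ i, |D i - D' i|) := by
  have h1 : ∀ q, ENNReal.ofReal |rank D q - rank D' q| =
      ∑ i, ENNReal.ofReal |(if D i ≤ q then (1:ℝ) else 0) - (if D' i ≤ q then 1 else 0)| := by
    intro q
    rw [ptwise D D' hmono hmono' q, ENNReal.ofReal_sum_of_nonneg fun i _ => abs_nonneg _]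
  simp only [h1]
  rw [lintegral_finset_sum]
  · rw [ENNReal.ofReal_sum_of_nonneg fun i _ => abs_nonneg _]
    exact Finset.sum_congr rfl fun i _ => single_int' (D i) (D' i) (hD i) (hD' i)
  · intro i _
    apply Measurable.ennreal_ofReal
    apply Measurable.abs
    apply Measurable.sub <;>
      exact Measurable.ite (measurableSet_le measurable_const measurable_id)
        measurable_const measurable_const
end

section
/- Let D, D' ∈ [0,1]^n be 1-dimensional datasets of size n and ε ≥ 0 a real number such that |D_i − D'_i| ≤ ε/n for all i ∈ [n]. Then ∫_{Q_c} |c_D(q) − c_{D'}(q)| dq ≤ 2ε. -/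
open MeasureTheory

open ENNReal

noncomputable def Gfun (a b : ℝ) (q : ℝ × ℝ) : ℝ≥0∞ :=
  (Set.Icc (min a b - q.2) (max a b - q.2)).indicator (fun _ => 1) q.1 +
  (Set.Icc (min a b) (max a b)).indicator (fun _ => 1) q.1

lemma Gmeas (a b : ℝ) : Measurable (Gfun a b) := by
  unfold Gfun
  apply Measurable.add
  · have : (fun q : ℝ × ℝ => (Set.Icc (min a b - q.2) (max a b - q.2)).indicator
        (fun _ => (1:ℝ≥0∞)) q.1) =
        (fun q : ℝ × ℝ => Set.indicator {p : ℝ × ℝ | min a b - p.2 ≤ p.1 ∧ p.1 ≤ max a b - p.2}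
          (fun _ => (1:ℝ≥0∞)) q) := by
      ext q
      by_cases h : q.1 ∈ Set.Icc (min a b - q.2) (max a b - q.2)
      · rw [Set.indicator_of_mem h, Set.indicator_of_mem (by exact h)]
      · rw [Set.indicator_of_notMem h, Set.indicator_of_notMem (by exact h)]
    rw [this]
    apply Measurable.indicator measurable_const
    have hset : {p : ℝ × ℝ | min a b - p.2 ≤ p.1 ∧ p.1 ≤ max a b - p.2} =
        {p : ℝ × ℝ | min a b - p.2 ≤ p.1} ∩ {p : ℝ × ℝ | p.1 ≤ max a b - p.2} := rfl
    rw [hset]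
    exact (measurableSet_le (by fun_prop) (by fun_prop)).inter
      (measurableSet_le (by fun_prop) (by fun_prop))
  · exact (measurable_const.indicator measurableSet_Icc).comp measurable_fst

lemma key (a b : ℝ) (q : ℝ × ℝ) :
    ENNReal.ofReal |(if q.1 ≤ a ∧ a ≤ q.1 + q.2 then (1:ℝ) else 0) -
      (if q.1 ≤ b ∧ b ≤ q.1 + q.2 then (1:ℝ) else 0)| ≤ Gfun a b q := by
  obtain ⟨c, r⟩ := q
  have hma : min a b ≤ a := min_le_left a b
  have hmb : min a b ≤ b := min_le_right a b
  have hMa : a ≤ max a b := le_max_left a b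
  have hMb : b ≤ max a b := le_max_right a b
  unfold Gfun
  by_cases h1 : c ≤ a ∧ a ≤ c + r <;> by_cases h2 : c ≤ b ∧ b ≤ c + r
  · rw [if_pos h1, if_pos h2]; simp
  · rw [if_pos h1, if_neg h2, sub_zero, abs_one, ENNReal.ofReal_one]
    rcases not_and_or.mp h2 with hb | hb <;> push_neg at hb
    · rw [Set.indicator_of_mem
        (show c ∈ Set.Icc (min a b) (max a b) from
          Set.mem_Icc.mpr ⟨by linarith, by linarith [h1.1]⟩)]
      exact le_add_self
    · rw [Set.indicator_of_mem
        (show c ∈ Set.Icc (min a b - r) (max a b - r) from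
          Set.mem_Icc.mpr ⟨by linarith [h1.2], by linarith⟩)]
      exact le_self_add
  · rw [if_neg h1, if_pos h2, zero_sub, abs_neg, abs_one, ENNReal.ofReal_one]
    rcases not_and_or.mp h1 with ha | ha <;> push_neg at ha
    · rw [Set.indicator_of_mem
        (show c ∈ Set.Icc (min a b) (max a b) from
          Set.mem_Icc.mpr ⟨by linarith, by linarith [h2.1]⟩)]
      exact le_add_self
    · rw [Set.indicator_of_mem
        (show c ∈ Set.Icc (min a b - r) (max a b - r) from
          Set.mem_Icc.mpr ⟨by linarith [h2.2], by linarith⟩)]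
      exact le_self_add
  · rw [if_neg h1, if_neg h2]; simp

lemma Ginner (a b r : ℝ) :
    ∫⁻ c, Gfun a b (c, r) = 2 * ENNReal.ofReal |a - b| := by
  unfold Gfun
  simp only
  rw [lintegral_add_left (measurable_const.indicator measurableSet_Icc),
    lintegral_indicator measurableSet_Icc, lintegral_indicator measurableSet_Icc,
    setLIntegral_one, setLIntegral_one, Real.volume_Icc, Real.volume_Icc]
  have habs : max a b - min a b = |a - b| := by
    rcases le_total a b with h | h
    · rw [max_eq_right h, min_eq_left h, abs_sub_comm, abs_of_nonneg (by linarith)]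
    · rw [max_eq_left h, min_eq_right h, abs_of_nonneg (by linarith)]
  have h : max a b - r - (min a b - r) = |a - b| := by
    rw [show max a b - r - (min a b - r) = max a b - min a b by ring, habs]
  rw [h, habs, two_mul]

lemma Gint (a b : ℝ) :
    ∫⁻ q in (Set.univ ×ˢ Set.Icc (0:ℝ) 1), Gfun a b q = 2 * ENNReal.ofReal |a - b| := by
  rw [Measure.volume_eq_prod, ← Measure.prod_restrict, Measure.restrict_univ]
  rw [lintegral_prod_symm _ (Gmeas a b).aemeasurable]
  simp_rw [Ginner a b]
  rw [setLIntegral_const, Real.volume_Icc]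
  norm_num

/-- if two 1-dimensional datasets are coordinatewise within `ε/n`,
their cardinality functions are within `2ε` in 1-norm. -/
theorem stmt_16 (n : ℕ) (hn : 0 < n) (ε : ℝ) (hε : 0 ≤ ε) (D D' : Fin n → ℝ)
    (hD : ∀ i, D i ∈ Set.Icc (0 : ℝ) 1) (hD' : ∀ i, D' i ∈ Set.Icc (0 : ℝ) 1)
    (hclose : ∀ i, |D i - D' i| ≤ ε / n) :
    ∫⁻ q in Qc1, ENNReal.ofReal |cardF1 D q - cardF1 D' q| ≤
      ENNReal.ofReal (2 * ε) := by
  have hn' : (n:ℝ) ≠ 0 := Nat.cast_ne_zero.mpr hn.ne'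
  calc ∫⁻ q in Qc1, ENNReal.ofReal |cardF1 D q - cardF1 D' q|
      ≤ ∫⁻ q in (Set.univ ×ˢ Set.Icc (0:ℝ) 1),
          ENNReal.ofReal |cardF1 D q - cardF1 D' q| :=
        lintegral_mono_set (fun q hq => ⟨Set.mem_univ _, hq.1⟩)
    _ ≤ ∫⁻ q in (Set.univ ×ˢ Set.Icc (0:ℝ) 1), ∑ i, Gfun (D i) (D' i) q := by
        apply lintegral_mono
        intro q
        calc ENNReal.ofReal |cardF1 D q - cardF1 D' q|
            ≤ ∑ i, ENNReal.ofReal |(if q.1 ≤ D i ∧ D i ≤ q.1 + q.2 then (1:ℝ) else 0) -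
                (if q.1 ≤ D' i ∧ D' i ≤ q.1 + q.2 then (1:ℝ) else 0)| := by
              unfold cardF1
              rw [← Finset.sum_sub_distrib,
                ← ENNReal.ofReal_sum_of_nonneg (fun i _ => abs_nonneg _)]
              exact ENNReal.ofReal_le_ofReal (Finset.abs_sum_le_sum_abs _ _)
          _ ≤ ∑ i, Gfun (D i) (D' i) q :=
              Finset.sum_le_sum (fun i _ => key (D i) (D' i) q)
    _ = ∑ i, ∫⁻ q in (Set.univ ×ˢ Set.Icc (0:ℝ) 1), Gfun (D i) (D' i) q :=
        lintegral_finset_sum _ (fun i _ => Gmeas _ _)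
    _ = ∑ i, 2 * ENNReal.ofReal |D i - D' i| := by simp_rw [Gint]
    _ ≤ ∑ _i : Fin n, 2 * ENNReal.ofReal (ε / n) :=
        Finset.sum_le_sum (fun i _ => by
          gcongr
          exact hclose i)
    _ = n * (2 * ENNReal.ofReal (ε / n)) := by
        rw [Finset.sum_const, Finset.card_univ, Fintype.card_fin, nsmul_eq_mul]
    _ = ENNReal.ofReal (2 * ε) := by
        rw [show ((2:ℝ≥0∞)) = ENNReal.ofReal (2:ℝ) by simp,
          ← ENNReal.ofReal_mul (by norm_num), ← ENNReal.ofReal_natCast n,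
          ← ENNReal.ofReal_mul (Nat.cast_nonneg n)]
        congr 1
        field_simp
end

section
/- Let D ∈ [0,1]^n be a 1-dimensional dataset and let m¹, m² ∈ {0,1}^n be mask vectors. For j ∈ {1,2}, define the masked cardinality function c_{D^j}(c, r) = Σ_{i=1}^n m^j_i · 1[c ≤ D_i ≤ c + r] on the query domain Q_c. Then ∫_{Q_c} |c_{D¹}(q) − c_{D²}(q)| dq ≤ (1/2)·Σ_{i=1}^n |m¹_i − m²_i|. -/
open MeasureTheory

/-- The masked cardinality function of a 1-dimensional dataset `D` with mask `m`:
`c_{D^m}(c, r) = Σ_i m_i · 1[c ≤ D_i ≤ c + r]`. -/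
noncomputable def maskedCardF1 {n : ℕ} (D : Fin n → ℝ) (m : Fin n → ℝ)
    (q : ℝ × ℝ) : ℝ :=
  ∑ i, m i * (if q.1 ≤ D i ∧ D i ≤ q.1 + q.2 then 1 else 0)

/-- Auxiliary: the strip `{(c,r) : r ∈ [0,1], x - r ≤ c ≤ x}` has volume `1/2`. -/
lemma vol_T (x : ℝ) :
    volume {p : ℝ × ℝ | p.2 ∈ Set.Icc (0:ℝ) 1 ∧ x - p.2 ≤ p.1 ∧ p.1 ≤ x}
      = ENNReal.ofReal (1/2) := by
  have hmeas : MeasurableSet {p : ℝ × ℝ | p.2 ∈ Set.Icc (0:ℝ) 1 ∧ x - p.2 ≤ p.1 ∧ p.1 ≤ x} := by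
    apply MeasurableSet.inter
    · exact (measurableSet_Icc).preimage measurable_snd
    · exact ((measurableSet_le (measurable_snd.const_sub x) measurable_fst).inter
        (measurableSet_le measurable_fst measurable_const))
  rw [Measure.volume_eq_prod, Measure.prod_apply_symm hmeas]
  have key : ∀ r : ℝ, volume ((fun c => (c, r)) ⁻¹' {p : ℝ × ℝ | p.2 ∈ Set.Icc (0:ℝ) 1 ∧ x - p.2 ≤ p.1 ∧ p.1 ≤ x})
      = (Set.Icc (0:ℝ) 1).indicator (fun r => ENNReal.ofReal r) r := by
    intro r
    by_cases hr : r ∈ Set.Icc (0:ℝ) 1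
    · have : ((fun c => (c, r)) ⁻¹' {p : ℝ × ℝ | p.2 ∈ Set.Icc (0:ℝ) 1 ∧ x - p.2 ≤ p.1 ∧ p.1 ≤ x})
          = Set.Icc (x - r) x := by
        ext c
        simp only [Set.mem_preimage, Set.mem_setOf_eq, Set.mem_Icc]
        exact ⟨fun h => h.2, fun h => ⟨hr, h⟩⟩
      rw [this, Real.volume_Icc, Set.indicator_of_mem hr]
      ring_nf
    · have : ((fun c => (c, r)) ⁻¹' {p : ℝ × ℝ | p.2 ∈ Set.Icc (0:ℝ) 1 ∧ x - p.2 ≤ p.1 ∧ p.1 ≤ x}) = ∅ := by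
        ext c
        simp only [Set.mem_preimage, Set.mem_setOf_eq, Set.mem_empty_iff_false, iff_false]
        rintro ⟨h, _⟩; exact hr h
      rw [this, Set.indicator_of_notMem hr]; simp
  simp_rw [key]
  rw [lintegral_indicator measurableSet_Icc,
    ← ofReal_integral_eq_lintegral_ofReal]
  · norm_num [MeasureTheory.integral_Icc_eq_integral_Ioc, ← intervalIntegral.integral_of_le (by norm_num : (0:ℝ) ≤ 1)]
  · exact (continuous_id.integrableOn_Icc)
  · exact (ae_restrict_iff' measurableSet_Icc).2 (Filter.Eventually.of_forall fun r hr => hr.1)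

/-- the 1-norm distance between the cardinality functions of two masked
versions of a dataset is at most half the Hamming distance between the masks. -/
theorem stmt_17 (n : ℕ) (D : Fin n → ℝ) (hD : ∀ i, D i ∈ Set.Icc (0 : ℝ) 1)
    (m₁ m₂ : Fin n → ℝ)
    (hm₁ : ∀ i, m₁ i = 0 ∨ m₁ i = 1) (hm₂ : ∀ i, m₂ i = 0 ∨ m₂ i = 1) :
    ∫⁻ q in Qc1, ENNReal.ofReal |maskedCardF1 D m₁ q - maskedCardF1 D m₂ q| ≤
      ENNReal.ofReal ((1 / 2) * ∑ i, |m₁ i - m₂ i|) := by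
  classical
  set S : Fin n → Set (ℝ × ℝ) := fun i => {q : ℝ × ℝ | q.1 ≤ D i ∧ D i ≤ q.1 + q.2} with hS
  have hSmeas : ∀ i, MeasurableSet (S i) := fun i =>
    (measurableSet_le measurable_fst measurable_const).inter
      (measurableSet_le measurable_const (measurable_fst.add measurable_snd))
  -- pointwise bound
  have hpt : ∀ q ∈ Qc1, ENNReal.ofReal |maskedCardF1 D m₁ q - maskedCardF1 D m₂ q|
      ≤ ∑ i, (S i).indicator (fun _ => ENNReal.ofReal |m₁ i - m₂ i|) q := by
    intro q _
    have h1 : |maskedCardF1 D m₁ q - maskedCardF1 D m₂ q|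
        ≤ ∑ i, |m₁ i - m₂ i| * (if q.1 ≤ D i ∧ D i ≤ q.1 + q.2 then 1 else 0) := by
      rw [maskedCardF1, maskedCardF1, ← Finset.sum_sub_distrib]
      refine (Finset.abs_sum_le_sum_abs _ _).trans ?_
      apply Finset.sum_le_sum
      intro i _
      rw [← sub_mul, abs_mul]
      gcongr
      split <;> simp
    refine (ENNReal.ofReal_le_ofReal h1).trans ?_
    rw [ENNReal.ofReal_sum_of_nonneg (fun i _ => by positivity)]
    apply Finset.sum_le_sum
    intro i _
    by_cases hq : q ∈ S i
    · rw [Set.indicator_of_mem hq]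
      simp only [hS, Set.mem_setOf_eq] at hq
      simp [hq]
    · rw [Set.indicator_of_notMem hq]
      simp only [hS, Set.mem_setOf_eq] at hq
      simp [hq]
  have hQmeas : MeasurableSet Qc1 := by
    apply MeasurableSet.inter
    · exact measurableSet_Icc.preimage measurable_snd
    · exact (measurableSet_le (measurable_snd.neg) measurable_fst).inter
        (measurableSet_le measurable_fst (measurable_const.sub measurable_snd))
  calc ∫⁻ q in Qc1, ENNReal.ofReal |maskedCardF1 D m₁ q - maskedCardF1 D m₂ q|
      ≤ ∫⁻ q in Qc1, ∑ i, (S i).indicator (fun _ => ENNReal.ofReal |m₁ i - m₂ i|) q := by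
        refine setLIntegral_mono' hQmeas hpt
    _ = ∑ i, ∫⁻ q in Qc1, (S i).indicator (fun _ => ENNReal.ofReal |m₁ i - m₂ i|) q := by
        refine lintegral_finset_sum _ (fun i _ => ?_)
        exact measurable_const.indicator (hSmeas i)
    _ ≤ ∑ i, ENNReal.ofReal |m₁ i - m₂ i| * ENNReal.ofReal (1/2) := by
        apply Finset.sum_le_sum
        intro i _
        rw [lintegral_indicator (hSmeas i), setLIntegral_const,
          Measure.restrict_apply (hSmeas i)]
        gcongr
        calc volume (S i ∩ Qc1)
            ≤ volume {p : ℝ × ℝ | p.2 ∈ Set.Icc (0:ℝ) 1 ∧ D i - p.2 ≤ p.1 ∧ p.1 ≤ D i} := by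
              apply measure_mono
              rintro ⟨c, r⟩ ⟨⟨h1, h2⟩, hr, _⟩
              exact ⟨hr, by linarith, h1⟩
          _ = ENNReal.ofReal (1/2) := vol_T (D i)
    _ = ENNReal.ofReal ((1 / 2) * ∑ i, |m₁ i - m₂ i|) := by
        rw [ENNReal.ofReal_mul (by norm_num),
          ENNReal.ofReal_sum_of_nonneg (fun i _ => abs_nonneg _),
          Finset.mul_sum]
        simp_rw [mul_comm]
end

section
/- Let μ be a Borel probability measure on [0,1] and let D, D' ∈ [0,1]^n be datasets whose entries are in nondecreasing (sorted) order. Then ∫_{[0,1]} |r_D(q) − r_{D'}(q)| dμ(q) = Σ_{i=1}^n μ([min(D_i, D'_i), max(D_i, D'_i))), where [a, b) denotes the half-open interval from a to b. -/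
open MeasureTheory

lemma rank_abs_eq {n : ℕ} (D D' : Fin n → ℝ)
    (hmono : Monotone D) (hmono' : Monotone D') (q : ℝ) :
    |rank D q - rank D' q| =
      ∑ i, (if q ∈ Set.Ico (min (D i) (D' i)) (max (D i) (D' i)) then (1:ℝ) else 0) := by
  set f : Fin n → ℝ := fun i =>
    (if D i ≤ q then (1:ℝ) else 0) - (if D' i ≤ q then (1:ℝ) else 0) with hfdef
  have hsum : rank D q - rank D' q = ∑ i, f i := by
    simp [rank, hfdef, Finset.sum_sub_distrib]
  have habs : ∀ i, |f i| =
      (if q ∈ Set.Ico (min (D i) (D' i)) (max (D i) (D' i)) then (1:ℝ) else 0) := by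
    intro i
    rcases le_or_gt (D i) q with h1 | h1 <;> rcases le_or_gt (D' i) q with h2 | h2
    · simp [hfdef, h1, h2, Set.mem_Ico, not_lt.2 (max_le h1 h2)]
    · simp [hfdef, h1, not_le.2 h2, Set.mem_Ico, le_trans (min_le_left _ _) h1,
        lt_of_lt_of_le h2 (le_max_right _ _)]
    · simp [hfdef, not_le.2 h1, h2, Set.mem_Ico, le_trans (min_le_right _ _) h2,
        lt_of_lt_of_le h1 (le_max_left _ _)]
    · simp [hfdef, not_le.2 h1, not_le.2 h2, Set.mem_Ico, not_le.2 (lt_min h1 h2)]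
  rw [hsum]
  have key : |∑ i, f i| = ∑ i, |f i| := by
    by_cases hc : ∀ i, D' i ≤ q → D i ≤ q
    · have hnn : ∀ i, 0 ≤ f i := by
        intro i
        by_cases h2 : D' i ≤ q
        · simp [hfdef, hc i h2, h2]
        · simp [hfdef, h2]; positivity
      rw [abs_of_nonneg (Finset.sum_nonneg fun i _ => hnn i)]
      exact Finset.sum_congr rfl fun i _ => (abs_of_nonneg (hnn i)).symm
    · push_neg at hc
      obtain ⟨i, hi2, hi1⟩ := hc
      have hc' : ∀ j, D j ≤ q → D' j ≤ q := by
        intro j hj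
        rcases le_total j i with hji | hij
        · exact le_trans (hmono' hji) hi2
        · exact absurd (le_trans (hmono hij) hj) (not_le.2 hi1)
      have hnp : ∀ j, f j ≤ 0 := by
        intro j
        by_cases h1 : D j ≤ q
        · simp [hfdef, h1, hc' j h1]
        · simp [hfdef, h1]; positivity
      rw [abs_of_nonpos (Finset.sum_nonpos fun j _ => hnp j), ← Finset.sum_neg_distrib]
      exact Finset.sum_congr rfl fun j _ => (abs_of_nonpos (hnp j)).symm
  rw [key]
  exact Finset.sum_congr rfl fun i _ => habs i

/-- for sorted datasets and a Borel probability measure `μ` on `[0,1]`,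
the μ-norm distance between rank functions equals the sum of the μ-measures of the
half-open intervals between corresponding data points. -/
theorem stmt_19 (μ : Measure ℝ) [IsProbabilityMeasure μ]
    (hsupp : μ (Set.Icc (0 : ℝ) 1)ᶜ = 0)
    (n : ℕ) (D D' : Fin n → ℝ)
    (hD : ∀ i, D i ∈ Set.Icc (0 : ℝ) 1) (hD' : ∀ i, D' i ∈ Set.Icc (0 : ℝ) 1)
    (hmono : Monotone D) (hmono' : Monotone D') :
    ∫⁻ q in Set.Icc (0 : ℝ) 1, ENNReal.ofReal |rank D q - rank D' q| ∂μ =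
      ∑ i, μ (Set.Ico (min (D i) (D' i)) (max (D i) (D' i))) := by
  have step1 : ∀ q, ENNReal.ofReal |rank D q - rank D' q| =
      ∑ i, (Set.Ico (min (D i) (D' i)) (max (D i) (D' i))).indicator (fun _ => (1:ENNReal)) q := by
    intro q
    rw [rank_abs_eq D D' hmono hmono' q,
      ENNReal.ofReal_sum_of_nonneg (fun i _ => by positivity)]
    refine Finset.sum_congr rfl fun i _ => ?_
    by_cases h : q ∈ Set.Ico (min (D i) (D' i)) (max (D i) (D' i)) <;>
      simp [h, Set.indicator_of_mem, Set.indicator_of_notMem]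
  simp_rw [step1]
  rw [lintegral_finset_sum]
  · refine Finset.sum_congr rfl fun i _ => ?_
    rw [lintegral_indicator measurableSet_Ico, setLIntegral_one,
      Measure.restrict_apply measurableSet_Ico, Set.inter_eq_self_of_subset_left]
    intro x hx
    constructor
    · exact le_trans (le_min (hD i).1 (hD' i).1) hx.1
    · exact le_trans hx.2.le (max_le (hD i).2 (hD' i).2)
  · exact fun i _ => (measurable_const.indicator measurableSet_Ico)
end
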